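/- Let 2 < p < ∞. The linear map T defined on finitely supported sequences in the ℓ^p-sum (Σ_{n=0}^∞ ⊕ ℓ²_{2^n})_p by T e_{n,i} = h_{n,i}/‖h_{n,i}‖_{L^p} extends to a bounded linear operator from (Σ ⊕ ℓ²_{2^n})_p into L^p(0,1). -/

import Mathlib

/-- The Haar function `h_{n,i}` on `(0,1)`. -/
noncomputable def haar (n i : ℕ) : ℝ → ℝ := fun t =>
  if ((i:ℝ) - 1) / 2 ^ n ≤ t ∧ t < (2 * (i:ℝ) - 1) / 2 ^ (n + 1) then 1
  else if (2 * (i:ℝ) - 1) / 2 ^ (n + 1) ≤ t ∧ t < (i:ℝ) / 2 ^ n then -1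
  else 0


namespace HaarOp
noncomputable section
open Finset

/-- Discrete Haar kernel: value of `haar n i` on the `k`-th dyadic interval of
generation `n+1`. -/
def hK (i k : ℕ) : ℝ := if k + 2 = 2*i then 1 else if k + 1 = 2*i then -1 else 0

lemma hK_pair (i k : ℕ) : hK i (2*k) + hK i (2*k+1) = 0 := by
  unfold hK; split_ifs <;> first | (exfalso; omega) | norm_num

lemma hK_abs_le (i k : ℕ) : |hK i k| ≤ 1 := by
  unfold hK; split_ifs <;> norm_num

lemma hK_ne_zero {i k : ℕ} (h : hK i k ≠ 0) : k + 2 = 2*i ∨ k + 1 = 2*i := by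
  unfold hK at h; split_ifs at h with h1 h2
  · exact Or.inl h1
  · exact Or.inr h2
  · exact absurd rfl h

/-- summation over a product range -/
lemma sum_range_mul_eq {M : Type*} [AddCommMonoid M] (a b : ℕ) (f : ℕ → M) :
    ∑ j ∈ Finset.range (a*b), f j = ∑ k ∈ Finset.range a, ∑ r ∈ Finset.range b, f (k*b+r) := by
  induction a with
  | zero => simp
  | succ n ih =>
    have h1 : (n+1)*b = n*b + b := by ring
    rw [h1, Finset.range_eq_Ico,
      ← Finset.sum_Ico_consecutive f (Nat.zero_le (n*b)) (Nat.le_add_right (n*b) b),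
      ← Finset.range_eq_Ico, ih, Finset.sum_range_succ]
    congr 1
    rw [Finset.sum_Ico_eq_sum_range]
    simp [Nat.add_sub_cancel_left]

lemma div_mul_add_div {b k r : ℕ} (hb : 0 < b) (hr : r < b) : (k*b+r)/b = k := by
  rw [mul_comm, Nat.mul_add_div hb, Nat.div_eq_of_lt hr, add_zero]

variable (N : ℕ)

/-- Conditional expectation onto the dyadic algebra of generation `m` (blocks of
size `2^(N-m)` among `2^N` points). -/
def Avg (m : ℕ) (v : ℕ → ℝ) (j : ℕ) : ℝ :=
  (2^(N-m) : ℝ)⁻¹ * ∑ r ∈ Finset.range (2^(N-m)), v (j / 2^(N-m) * 2^(N-m) + r)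

lemma Avg_apply (m : ℕ) (v : ℕ → ℝ) {k r : ℕ} (hr : r < 2^(N-m)) :
    Avg N m v (k * 2^(N-m) + r)
      = (2^(N-m) : ℝ)⁻¹ * ∑ s ∈ Finset.range (2^(N-m)), v (k * 2^(N-m) + s) := by
  unfold Avg
  rw [div_mul_add_div (Nat.pow_pos (by norm_num)) hr]

lemma Avg_add (m : ℕ) (u v : ℕ → ℝ) (j : ℕ) :
    Avg N m (fun x => u x + v x) j = Avg N m u j + Avg N m v j := by
  unfold Avg; rw [Finset.sum_add_distrib]; ring

lemma Avg_N_eq (v : ℕ → ℝ) (j : ℕ) : Avg N N v j = v j := by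
  unfold Avg; simp

/-- decomposition of a sum over `range 2^N` into level-`m` blocks -/
lemma sum_blocks {m : ℕ} (hm : m ≤ N) (f : ℕ → ℝ) :
    ∑ j ∈ Finset.range (2^N), f j
      = ∑ k ∈ Finset.range (2^m), ∑ r ∈ Finset.range (2^(N-m)), f (k * 2^(N-m) + r) := by
  have h2 : (2:ℕ)^N = 2^m * 2^(N-m) := by
    rw [← pow_add, Nat.add_sub_cancel' hm]
  rw [h2, sum_range_mul_eq]

lemma sum_Avg_mul {m : ℕ} (hm : m ≤ N) (v w : ℕ → ℝ) :
    ∑ j ∈ Finset.range (2^N), Avg N m v j * w j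
      = ∑ k ∈ Finset.range (2^m), (2^(N-m) : ℝ)⁻¹ *
          ((∑ r ∈ Finset.range (2^(N-m)), v (k * 2^(N-m) + r)) *
           (∑ r ∈ Finset.range (2^(N-m)), w (k * 2^(N-m) + r))) := by
  rw [sum_blocks N hm]
  refine Finset.sum_congr rfl (fun k _ => ?_)
  have h0 : ∀ r ∈ Finset.range (2^(N-m)), Avg N m v (k * 2^(N-m) + r) * w (k * 2^(N-m) + r)
      = ((2^(N-m) : ℝ)⁻¹ * ∑ s ∈ Finset.range (2^(N-m)), v (k * 2^(N-m) + s))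
        * w (k * 2^(N-m) + r) := by
    intro r hr
    rw [Avg_apply N m v (Finset.mem_range.1 hr)]
  rw [Finset.sum_congr rfl h0, ← Finset.mul_sum, mul_assoc]

lemma Avg_selfadjoint {m : ℕ} (hm : m ≤ N) (v w : ℕ → ℝ) :
    ∑ j ∈ Finset.range (2^N), Avg N m v j * w j
      = ∑ j ∈ Finset.range (2^N), v j * Avg N m w j := by
  rw [sum_Avg_mul N hm v w]
  have h3 : ∑ j ∈ Finset.range (2^N), v j * Avg N m w j
      = ∑ j ∈ Finset.range (2^N), Avg N m w j * v j :=
    Finset.sum_congr rfl (fun j _ => mul_comm _ _)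
  rw [h3, sum_Avg_mul N hm w v]
  exact Finset.sum_congr rfl fun k _ => by ring

-- NEW MATERIAL

lemma Avg_tower {m m' : ℕ} (h : m ≤ m') (h' : m' ≤ N) (v : ℕ → ℝ) (j : ℕ) :
    Avg N m (Avg N m' v) j = Avg N m v j := by
  have hbb : (2:ℕ)^(N-m) = 2^(m'-m) * 2^(N-m') := by rw [← pow_add]; congr 1; omega
  show (2^(N-m) : ℝ)⁻¹ * ∑ r ∈ Finset.range (2^(N-m)), Avg N m' v (j / 2^(N-m) * 2^(N-m) + r)
      = (2^(N-m) : ℝ)⁻¹ * ∑ r ∈ Finset.range (2^(N-m)), v (j / 2^(N-m) * 2^(N-m) + r)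
  congr 1
  rw [hbb, sum_range_mul_eq, sum_range_mul_eq]
  refine Finset.sum_congr rfl fun s hs => ?_
  have harg : ∀ r' : ℕ, j / (2^(m'-m) * 2^(N-m')) * (2^(m'-m) * 2^(N-m')) + (s * 2^(N-m') + r')
      = (j / (2^(m'-m) * 2^(N-m')) * 2^(m'-m) + s) * 2^(N-m') + r' := by intro r'; ring
  calc ∑ r' ∈ Finset.range (2^(N-m')),
        Avg N m' v (j / (2^(m'-m)*2^(N-m')) * (2^(m'-m)*2^(N-m')) + (s * 2^(N-m') + r'))
      = ∑ r' ∈ Finset.range (2^(N-m')), ((2^(N-m'):ℝ)⁻¹ *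
          ∑ u ∈ Finset.range (2^(N-m')),
            v ((j / (2^(m'-m)*2^(N-m')) * 2^(m'-m) + s) * 2^(N-m') + u)) := by
        refine Finset.sum_congr rfl fun r' hr' => ?_
        rw [harg r', Avg_apply N m' v (Finset.mem_range.1 hr')]
    _ = ∑ u ∈ Finset.range (2^(N-m')),
          v (j / (2^(m'-m)*2^(N-m')) * (2^(m'-m)*2^(N-m')) + (s * 2^(N-m') + u)) := by
        rw [Finset.sum_const, Finset.card_range, nsmul_eq_mul, ← mul_assoc]
        push_cast
        rw [mul_inv_cancel₀ (by positivity), one_mul]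
        exact Finset.sum_congr rfl fun u _ => by rw [← harg u]

def Dm (m : ℕ) (v : ℕ → ℝ) (j : ℕ) : ℝ := Avg N (m+1) v j - Avg N m v j

def Qm (m : ℕ) (v : ℕ → ℝ) : ℝ := ∑ j ∈ Finset.range (2^N), (Dm N m v j)^2

lemma Dm_add (m : ℕ) (u v : ℕ → ℝ) (j : ℕ) :
    Dm N m (fun x => u x + v x) j = Dm N m u j + Dm N m v j := by
  unfold Dm; rw [Avg_add, Avg_add]; ring

lemma Qm_nonneg (m : ℕ) (v : ℕ → ℝ) : 0 ≤ Qm N m v :=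
  Finset.sum_nonneg fun j _ => sq_nonneg _

lemma sum_sq_Avg_succ {m : ℕ} (hm : m + 1 ≤ N) (v : ℕ → ℝ) :
    ∑ j ∈ Finset.range (2^N), (Avg N (m+1) v j)^2
      = ∑ j ∈ Finset.range (2^N), (Avg N m v j)^2 + Qm N m v := by
  have hmN : m ≤ N := le_trans (Nat.le_succ m) hm
  have tower1 : ∀ j, Avg N m (Avg N (m+1) v) j = Avg N m v j :=
    Avg_tower N (Nat.le_succ m) hm v
  have tower2 : ∀ j, Avg N m (Avg N m v) j = Avg N m v j :=
    Avg_tower N le_rfl hmN v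
  have cross : ∑ j ∈ Finset.range (2^N), Avg N m v j * Avg N (m+1) v j
      = ∑ j ∈ Finset.range (2^N), (Avg N m v j)^2 := by
    rw [Avg_selfadjoint N hmN v (Avg N (m+1) v)]
    have e2 : ∑ j ∈ Finset.range (2^N), v j * Avg N m (Avg N (m+1) v) j
        = ∑ j ∈ Finset.range (2^N), v j * Avg N m v j :=
      Finset.sum_congr rfl fun j _ => by rw [tower1 j]
    rw [e2]
    have e3 : ∑ j ∈ Finset.range (2^N), Avg N m v j * Avg N m v j
        = ∑ j ∈ Finset.range (2^N), v j * Avg N m (Avg N m v) j :=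
      Avg_selfadjoint N hmN v (Avg N m v)
    have e4 : ∑ j ∈ Finset.range (2^N), v j * Avg N m (Avg N m v) j
        = ∑ j ∈ Finset.range (2^N), v j * Avg N m v j :=
      Finset.sum_congr rfl fun j _ => by rw [tower2 j]
    rw [← e4, ← e3]
    exact Finset.sum_congr rfl fun j _ => (sq (Avg N m v j)).symm ▸ by ring
  have expand : ∀ j, (Avg N (m+1) v j)^2
      = (Avg N m v j)^2 + 2*(Avg N m v j * Avg N (m+1) v j - (Avg N m v j)^2)
        + (Dm N m v j)^2 := by
    intro j; unfold Dm; ring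
  rw [Finset.sum_congr rfl (fun j _ => expand j), Finset.sum_add_distrib,
    Finset.sum_add_distrib, ← Finset.mul_sum, Finset.sum_sub_distrib, cross]
  unfold Qm; ring

lemma sum_Qm_le (v : ℕ → ℝ) :
    ∑ m ∈ Finset.range N, Qm N m v ≤ ∑ j ∈ Finset.range (2^N), (v j)^2 := by
  have step : ∀ M, M ≤ N → ∑ m ∈ Finset.range M, Qm N m v
      ≤ ∑ j ∈ Finset.range (2^N), (Avg N M v j)^2 := by
    intro M
    induction M with
    | zero => intro _; simp; positivity
    | succ n ih =>
      intro hn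
      have hnN : n ≤ N := le_trans (Nat.le_succ n) hn
      rw [Finset.sum_range_succ, sum_sq_Avg_succ N hn v]
      exact add_le_add_left (ih hnN) _
  have h := step N le_rfl
  calc ∑ m ∈ Finset.range N, Qm N m v ≤ ∑ j ∈ Finset.range (2^N), (Avg N N v j)^2 := h
    _ = ∑ j ∈ Finset.range (2^N), (v j)^2 :=
        Finset.sum_congr rfl fun j _ => by rw [Avg_N_eq]

lemma abs_Avg_le {m : ℕ} (hm : m ≤ N) (v : ℕ → ℝ) {j : ℕ} (hj : j < 2^N) :
    |Avg N m v j| ≤ (2^(N-m) : ℝ)⁻¹ * ∑ j' ∈ Finset.range (2^N), |v j'| := by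
  have hb : (0:ℕ) < 2^(N-m) := Nat.pow_pos (by norm_num)
  have hBb : j / 2^(N-m) * 2^(N-m) + 2^(N-m) ≤ 2^N := by
    have h2 : (2:ℕ)^N = 2^m * 2^(N-m) := by rw [← pow_add]; congr 1; omega
    have hdiv : j / 2^(N-m) < 2^m := by
      rw [Nat.div_lt_iff_lt_mul hb]; rw [h2] at hj; omega
    calc j / 2^(N-m) * 2^(N-m) + 2^(N-m) = (j / 2^(N-m) + 1) * 2^(N-m) := by ring
      _ ≤ 2^m * 2^(N-m) := Nat.mul_le_mul_right _ hdiv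
      _ = 2^N := h2.symm
  unfold Avg
  rw [abs_mul, abs_inv, abs_of_pos (by positivity)]
  refine mul_le_mul_of_nonneg_left ?_ (by positivity)
  refine le_trans (Finset.abs_sum_le_sum_abs _ _) ?_
  rw [show ∑ r ∈ Finset.range (2^(N-m)), |v (j / 2^(N-m) * 2^(N-m) + r)|
      = ∑ x ∈ Finset.Ico (j / 2^(N-m) * 2^(N-m)) (j / 2^(N-m) * 2^(N-m) + 2^(N-m)), |v x| by
    rw [Finset.sum_Ico_eq_sum_range]; simp [Nat.add_sub_cancel_left]]
  refine Finset.sum_le_sum_of_subset_of_nonneg ?_ (fun _ _ _ => abs_nonneg _)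
  intro x hx
  rw [Finset.mem_Ico] at hx
  rw [Finset.mem_range]
  omega

lemma sum_abs_Avg_le {m : ℕ} (hm : m ≤ N) (v : ℕ → ℝ) :
    ∑ j ∈ Finset.range (2^N), |Avg N m v j| ≤ ∑ j ∈ Finset.range (2^N), |v j| := by
  rw [sum_blocks N hm (fun j => |Avg N m v j|), sum_blocks N hm (fun j => |v j|)]
  refine Finset.sum_le_sum fun k _ => ?_
  have e1 : ∀ r ∈ Finset.range (2^(N-m)), |Avg N m v (k * 2^(N-m) + r)|
      = (2^(N-m):ℝ)⁻¹ * |∑ s ∈ Finset.range (2^(N-m)), v (k * 2^(N-m) + s)| := by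
    intro r hr
    rw [Avg_apply N m v (Finset.mem_range.1 hr), abs_mul, abs_inv, abs_of_pos (by positivity)]
  rw [Finset.sum_congr rfl e1, Finset.sum_const, Finset.card_range, nsmul_eq_mul, ← mul_assoc]
  push_cast
  rw [mul_inv_cancel₀ (by positivity), one_mul]
  exact Finset.abs_sum_le_sum_abs _ _

lemma Qm_le_weak {m : ℕ} (hm : m + 1 ≤ N) (v : ℕ → ℝ) :
    Qm N m v ≤ (2:ℝ)^(m+1) * ((2:ℝ)^N)⁻¹ * (∑ j ∈ Finset.range (2^N), |v j|)^2 := by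
  have h1 : Qm N m v ≤ ∑ j ∈ Finset.range (2^N), (Avg N (m+1) v j)^2 := by
    rw [sum_sq_Avg_succ N hm v]
    have : (0:ℝ) ≤ ∑ j ∈ Finset.range (2^N), (Avg N m v j)^2 := by positivity
    linarith
  refine h1.trans ?_
  have hpow : ((2:ℝ)^(N-(m+1)))⁻¹ = (2:ℝ)^(m+1) * ((2:ℝ)^N)⁻¹ := by
    have h2 : (2:ℝ)^(N-(m+1)) * 2^(m+1) = 2^N := by rw [← pow_add]; congr 1; omega
    field_simp
    linarith [h2]
  have key : ∀ j ∈ Finset.range (2^N), (Avg N (m+1) v j)^2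
      ≤ ((2:ℝ)^(N-(m+1)))⁻¹ * (∑ j' ∈ Finset.range (2^N), |v j'|) * |Avg N (m+1) v j| := by
    intro j hj
    have := abs_Avg_le N hm v (Finset.mem_range.1 hj)
    calc (Avg N (m+1) v j)^2 = |Avg N (m+1) v j| * |Avg N (m+1) v j| := by
          rw [← abs_mul, abs_of_nonneg (mul_self_nonneg _)]; ring
      _ ≤ ((2:ℝ)^(N-(m+1)))⁻¹ * (∑ j' ∈ Finset.range (2^N), |v j'|) * |Avg N (m+1) v j| := by
          refine mul_le_mul_of_nonneg_right ?_ (abs_nonneg _)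
          calc |Avg N (m+1) v j| ≤ (2^(N-(m+1)) : ℝ)⁻¹ * ∑ j' ∈ Finset.range (2^N), |v j'| := this
            _ = ((2:ℝ)^(N-(m+1)))⁻¹ * (∑ j' ∈ Finset.range (2^N), |v j'|) := by norm_num
  calc ∑ j ∈ Finset.range (2^N), (Avg N (m+1) v j)^2
      ≤ ∑ j ∈ Finset.range (2^N),
          ((2:ℝ)^(N-(m+1)))⁻¹ * (∑ j' ∈ Finset.range (2^N), |v j'|) * |Avg N (m+1) v j| :=
        Finset.sum_le_sum key
    _ = ((2:ℝ)^(N-(m+1)))⁻¹ * (∑ j' ∈ Finset.range (2^N), |v j'|)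
          * ∑ j ∈ Finset.range (2^N), |Avg N (m+1) v j| := by rw [← Finset.mul_sum]
    _ ≤ ((2:ℝ)^(N-(m+1)))⁻¹ * (∑ j' ∈ Finset.range (2^N), |v j'|)
          * ∑ j ∈ Finset.range (2^N), |v j| := by
        refine mul_le_mul_of_nonneg_left (sum_abs_Avg_le N hm v) (by positivity)
    _ = (2:ℝ)^(m+1) * ((2:ℝ)^N)⁻¹ * (∑ j ∈ Finset.range (2^N), |v j|)^2 := by
        rw [hpow]; ring

-- generic Cauchy-Schwarz helpers
lemma sum_mul_le_sqrt (s : Finset ℕ) (f g : ℕ → ℝ) :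
    ∑ j ∈ s, f j * g j ≤ Real.sqrt (∑ j ∈ s, (f j)^2) * Real.sqrt (∑ j ∈ s, (g j)^2) := by
  refine le_trans (le_abs_self _) ?_
  rw [← Real.sqrt_sq_eq_abs, ← Real.sqrt_mul (by positivity)]
  exact Real.sqrt_le_sqrt (Finset.sum_mul_sq_le_sq_mul_sq s f g)

lemma sqrt_sum_sq_add (s : Finset ℕ) (f g : ℕ → ℝ) :
    Real.sqrt (∑ j ∈ s, (f j + g j)^2)
      ≤ Real.sqrt (∑ j ∈ s, (f j)^2) + Real.sqrt (∑ j ∈ s, (g j)^2) := by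
  set a := Real.sqrt (∑ j ∈ s, (f j)^2) with ha
  set b := Real.sqrt (∑ j ∈ s, (g j)^2) with hb
  have ha0 : 0 ≤ a := Real.sqrt_nonneg _
  have hb0 : 0 ≤ b := Real.sqrt_nonneg _
  have hfa : ∑ j ∈ s, (f j)^2 = a^2 := by rw [ha, Real.sq_sqrt (by positivity)]
  have hgb : ∑ j ∈ s, (g j)^2 = b^2 := by rw [hb, Real.sq_sqrt (by positivity)]
  have hfg : ∑ j ∈ s, f j * g j ≤ a * b := sum_mul_le_sqrt s f g
  have expand : ∑ j ∈ s, (f j + g j)^2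
      = ∑ j ∈ s, (f j)^2 + 2 * ∑ j ∈ s, f j * g j + ∑ j ∈ s, (g j)^2 := by
    have e : ∀ j ∈ s, (f j + g j)^2 = f j^2 + 2*(f j * g j) + g j^2 := fun j _ => by ring
    rw [Finset.sum_congr rfl e, Finset.sum_add_distrib, Finset.sum_add_distrib, ← Finset.mul_sum]
  have : ∑ j ∈ s, (f j + g j)^2 ≤ (a+b)^2 := by
    rw [expand, hfa, hgb]; nlinarith
  calc Real.sqrt (∑ j ∈ s, (f j + g j)^2) ≤ Real.sqrt ((a+b)^2) := Real.sqrt_le_sqrt this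
    _ = a + b := Real.sqrt_sq (by positivity)

/-- finite geometric sums with ratio `ρ < 1` are bounded by `(1-ρ)⁻¹` -/
lemma geom_finset_le {ρ : ℝ} (h0 : 0 ≤ ρ) (h1 : ρ < 1) (A : Finset ℕ) :
    ∑ k ∈ A, ρ^k ≤ (1-ρ)⁻¹ := by
  have hsub : A ⊆ Finset.range (A.sup id + 1) := by
    intro k hk; rw [Finset.mem_range]
    exact Nat.lt_succ_of_le (Finset.le_sup (f := id) hk)
  refine le_trans (Finset.sum_le_sum_of_subset_of_nonneg hsub
    (fun k _ _ => pow_nonneg h0 k)) ?_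
  set n := A.sup id + 1 with hn
  have e : (∑ k ∈ Finset.range n, ρ^k) * (1-ρ) = 1 - ρ^n := by
    have e0 := geom_sum_mul ρ n
    have e1 : (∑ k ∈ Finset.range n, ρ^k) * (1-ρ)
        = -((∑ k ∈ Finset.range n, ρ^k) * (ρ-1)) := by ring
    rw [e1, e0]; ring
  have key : (∑ k ∈ Finset.range n, ρ^k) * (1-ρ) ≤ 1 := by
    rw [e]; nlinarith [pow_nonneg h0 n]
  have h3 : (0:ℝ) < 1 - ρ := by linarith
  calc ∑ k ∈ Finset.range n, ρ^k
      = ((∑ k ∈ Finset.range n, ρ^k) * (1-ρ)) * (1-ρ)⁻¹ := by field_simp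
    _ ≤ 1 * (1-ρ)⁻¹ := mul_le_mul_of_nonneg_right key (le_of_lt (inv_pos.mpr h3))
    _ = (1-ρ)⁻¹ := one_mul _

lemma zpow_rpow_split {α : ℝ} {ℓ L : ℤ} (h : ℓ ≤ L) :
    ((2:ℝ)^ℓ)^α = ((2:ℝ)^L)^α * ((2:ℝ)^(-α))^((L-ℓ).toNat) := by
  set k := (L-ℓ).toNat with hk
  have hLk : L = ℓ + (k:ℤ) := by omega
  have h2 : (2:ℝ)^L = (2:ℝ)^ℓ * (2:ℝ)^(k:ℕ) := by
    rw [hLk, zpow_add₀ (two_ne_zero), zpow_natCast]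
  have hpos : (0:ℝ) < (2:ℝ)^ℓ := zpow_pos (by norm_num) ℓ
  rw [h2, Real.mul_rpow (le_of_lt hpos) (by positivity)]
  have h3 : ((2:ℝ)^(k:ℕ))^α * ((2:ℝ)^(-α))^(k:ℕ) = 1 := by
    rw [← Real.rpow_natCast ((2:ℝ)^(-α)) k, ← Real.rpow_mul (by norm_num : (0:ℝ) ≤ 2),
      ← Real.rpow_natCast (2:ℝ) k, ← Real.rpow_mul (by norm_num : (0:ℝ) ≤ 2),
      ← Real.rpow_add (by norm_num : (0:ℝ) < 2)]
    ring_nf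
    simp
  calc ((2:ℝ)^ℓ)^α = ((2:ℝ)^ℓ)^α * (((2:ℝ)^(k:ℕ))^α * ((2:ℝ)^(-α))^(k:ℕ)) := by
        rw [h3, mul_one]
    _ = ((2:ℝ)^ℓ)^α * ((2:ℝ)^(k:ℕ))^α * ((2:ℝ)^(-α))^(k:ℕ) := by ring

/-- Geometric sum over integer grid, small part. -/
lemma grid_sum_lt {α : ℝ} (hα : 0 < α) {v : ℝ} (hv : 0 < v) (S : Finset ℤ) :
    ∑ ℓ ∈ S, (if (2:ℝ)^ℓ < v then ((2:ℝ)^ℓ)^α else 0)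
      ≤ v^α * (1-(2:ℝ)^(-α))⁻¹ := by
  have hone : (2:ℝ)^(-α) < 1 := Real.rpow_lt_one_of_one_lt_of_neg (by norm_num) (by linarith)
  obtain ⟨L, hL1, hL2⟩ := exists_mem_Ioc_zpow hv one_lt_two
  rw [Finset.sum_ite, Finset.sum_const_zero, add_zero]
  set T := S.filter (fun ℓ => (2:ℝ)^ℓ < v) with hT
  have hTle : ∀ ℓ ∈ T, ℓ ≤ L := by
    intro ℓ hℓ
    rw [hT, Finset.mem_filter] at hℓ
    by_contra hc
    push_neg at hc
    have : (2:ℝ)^(L+1) ≤ (2:ℝ)^ℓ := zpow_le_zpow_right₀ (by norm_num) (by omega)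
    linarith [hℓ.2, hL2]
  have step : ∀ ℓ ∈ T, ((2:ℝ)^ℓ)^α = ((2:ℝ)^L)^α * ((2:ℝ)^(-α))^((L-ℓ).toNat) :=
    fun ℓ hℓ => zpow_rpow_split (hTle ℓ hℓ)
  rw [Finset.sum_congr rfl step, ← Finset.mul_sum]
  have hmap : ∑ ℓ ∈ T, ((2:ℝ)^(-α))^((L-ℓ).toNat) ≤ (1-(2:ℝ)^(-α))⁻¹ := by
    have hinj : ∀ x ∈ T, ∀ y ∈ T, (L-x).toNat = (L-y).toNat → x = y := by
      intro x hx y hy hxy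
      have hx' := hTle x hx; have hy' := hTle y hy
      omega
    rw [← Finset.sum_image (f := fun k => ((2:ℝ)^(-α))^k) (g := fun ℓ => (L-ℓ).toNat) hinj]
    exact geom_finset_le (by positivity) hone _
  have hbase : ((2:ℝ)^L)^α ≤ v^α :=
    Real.rpow_le_rpow (by positivity) (le_of_lt hL1) (le_of_lt hα)
  calc ((2:ℝ)^L)^α * ∑ ℓ ∈ T, ((2:ℝ)^(-α))^((L-ℓ).toNat)
      ≤ ((2:ℝ)^L)^α * (1-(2:ℝ)^(-α))⁻¹ :=
        mul_le_mul_of_nonneg_left hmap (by positivity)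
    _ ≤ v^α * (1-(2:ℝ)^(-α))⁻¹ :=
        mul_le_mul_of_nonneg_right hbase (le_of_lt (inv_pos.mpr (by linarith)))

/-- Geometric sum over integer grid, large part. -/
lemma grid_sum_ge {β : ℝ} (hβ : β < 0) {v : ℝ} (hv : 0 < v) (S : Finset ℤ) :
    ∑ ℓ ∈ S, (if v ≤ (2:ℝ)^ℓ then ((2:ℝ)^ℓ)^β else 0)
      ≤ v^β * (1-(2:ℝ)^β)⁻¹ := by
  have hone : (2:ℝ)^β < 1 := Real.rpow_lt_one_of_one_lt_of_neg (by norm_num) hβ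
  obtain ⟨L, hL1, hL2⟩ := exists_mem_Ioc_zpow hv one_lt_two
  rw [Finset.sum_ite, Finset.sum_const_zero, add_zero]
  set T := S.filter (fun ℓ => v ≤ (2:ℝ)^ℓ) with hT
  have hTge : ∀ ℓ ∈ T, L+1 ≤ ℓ := by
    intro ℓ hℓ
    rw [hT, Finset.mem_filter] at hℓ
    by_contra hc
    push_neg at hc
    have : (2:ℝ)^ℓ ≤ (2:ℝ)^L := zpow_le_zpow_right₀ (by norm_num) (by omega)
    linarith [hℓ.2, hL1]
  have step : ∀ ℓ ∈ T, ((2:ℝ)^ℓ)^β = ((2:ℝ)^(L+1))^β * ((2:ℝ)^β)^((ℓ-(L+1)).toNat) := by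
    intro ℓ hℓ
    have h := zpow_rpow_split (α := β) (hTge ℓ hℓ)
    rw [h]
    have hprod : ((2:ℝ)^(-β))^((ℓ-(L+1)).toNat) * ((2:ℝ)^β)^((ℓ-(L+1)).toNat) = 1 := by
      rw [← mul_pow, ← Real.rpow_add (by norm_num : (0:ℝ) < 2)]
      norm_num
    calc ((2:ℝ)^ℓ)^β
        = ((2:ℝ)^ℓ)^β * (((2:ℝ)^(-β))^((ℓ-(L+1)).toNat) * ((2:ℝ)^β)^((ℓ-(L+1)).toNat)) := by
          rw [hprod, mul_one]
      _ = ((2:ℝ)^ℓ)^β * ((2:ℝ)^(-β))^((ℓ-(L+1)).toNat) * ((2:ℝ)^β)^((ℓ-(L+1)).toNat) := by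
          ring
  rw [Finset.sum_congr rfl step, ← Finset.mul_sum]
  have hmap : ∑ ℓ ∈ T, ((2:ℝ)^β)^((ℓ-(L+1)).toNat) ≤ (1-(2:ℝ)^β)⁻¹ := by
    have hinj : ∀ x ∈ T, ∀ y ∈ T, (x-(L+1)).toNat = (y-(L+1)).toNat → x = y := by
      intro x hx y hy hxy
      have hx' := hTge x hx; have hy' := hTge y hy
      omega
    rw [← Finset.sum_image (f := fun k => ((2:ℝ)^β)^k) (g := fun ℓ => (ℓ-(L+1)).toNat) hinj]
    exact geom_finset_le (by positivity) hone _
  have hbase : ((2:ℝ)^(L+1))^β ≤ v^β :=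
    Real.rpow_le_rpow_of_nonpos hv hL2 (le_of_lt hβ)
  calc ((2:ℝ)^(L+1))^β * ∑ ℓ ∈ T, ((2:ℝ)^β)^((ℓ-(L+1)).toNat)
      ≤ ((2:ℝ)^(L+1))^β * (1-(2:ℝ)^β)⁻¹ :=
        mul_le_mul_of_nonneg_left hmap (by positivity)
    _ ≤ v^β * (1-(2:ℝ)^β)⁻¹ :=
        mul_le_mul_of_nonneg_right hbase (le_of_lt (inv_pos.mpr (by linarith)))

lemma sum_pow2_inv_le (S : Finset ℕ) {c : ℝ} (hc : 0 ≤ c)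
    (h : ∀ m ∈ S, ((2:ℝ)^m)⁻¹ ≤ c) :
    ∑ m ∈ S, ((2:ℝ)^m)⁻¹ ≤ 2*c := by
  rcases S.eq_empty_or_nonempty with rfl | hS
  · simp; linarith
  · set m₀ := S.min' hS with hm₀
    have hsub : S ⊆ Finset.Ico m₀ (S.max' hS + 1) := by
      intro x hx; rw [Finset.mem_Ico]
      exact ⟨Finset.min'_le S x hx, Nat.lt_succ_of_le (Finset.le_max' S x hx)⟩
    have h1 : ∑ m ∈ S, ((2:ℝ)^m)⁻¹ ≤ ∑ m ∈ Finset.Ico m₀ (S.max' hS + 1), ((2:ℝ)^m)⁻¹ :=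
      Finset.sum_le_sum_of_subset_of_nonneg hsub (fun m _ _ => by positivity)
    have h2 : ∑ m ∈ Finset.Ico m₀ (S.max' hS + 1), ((2:ℝ)^m)⁻¹
        = ((2:ℝ)^m₀)⁻¹ * ∑ k ∈ Finset.range (S.max' hS + 1 - m₀), ((2:ℝ)⁻¹)^k := by
      rw [Finset.sum_Ico_eq_sum_range, Finset.mul_sum]
      refine Finset.sum_congr rfl fun k _ => ?_
      rw [pow_add, mul_inv, inv_pow]
    have hval : (1-(2:ℝ)⁻¹)⁻¹ = 2 := by norm_num
    have h3 : ∑ k ∈ Finset.range (S.max' hS + 1 - m₀), ((2:ℝ)⁻¹)^k ≤ 2 := by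
      have hg := geom_finset_le (ρ := (2:ℝ)⁻¹) (by norm_num) (by norm_num)
        (Finset.range (S.max' hS + 1 - m₀))
      rw [hval] at hg
      exact hg
    have h4 : ((2:ℝ)^m₀)⁻¹ ≤ c := h m₀ (S.min'_mem hS)
    calc ∑ m ∈ S, ((2:ℝ)^m)⁻¹
        ≤ ((2:ℝ)^m₀)⁻¹ * ∑ k ∈ Finset.range (S.max' hS + 1 - m₀), ((2:ℝ)⁻¹)^k := by
          rw [← h2]; exact h1
      _ ≤ ((2:ℝ)^m₀)⁻¹ * 2 := mul_le_mul_of_nonneg_left h3 (by positivity)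
      _ ≤ 2*c := by nlinarith [inv_pos.mpr (show (0:ℝ) < 2^m₀ by positivity)]

/-- the constant from Claim C -/
def K0 (q : ℝ) : ℝ := (2:ℝ)^q * (8*(1-(2:ℝ)^(-(q-1)))⁻¹ + 4*(1-(2:ℝ)^(q-2))⁻¹)

lemma K0_pos {q : ℝ} (hq1 : 1 < q) (hq2 : q < 2) : 0 < K0 q := by
  unfold K0
  have h1 : (2:ℝ)^(-(q-1)) < 1 :=
    Real.rpow_lt_one_of_one_lt_of_neg (by norm_num) (by linarith)
  have h2 : (2:ℝ)^(q-2) < 1 :=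
    Real.rpow_lt_one_of_one_lt_of_neg (by norm_num) (by linarith)
  have h3 : (0:ℝ) < (2:ℝ)^q := Real.rpow_pos_of_pos (by norm_num) q
  have h4 : (0:ℝ) < (1-(2:ℝ)^(-(q-1)))⁻¹ := inv_pos.2 (by linarith)
  have h5 : (0:ℝ) < (1-(2:ℝ)^(q-2))⁻¹ := inv_pos.2 (by linarith)
  positivity




lemma Avg_congr (m : ℕ) {x y : ℕ → ℝ} (h : ∀ j, x j = y j) (j : ℕ) :
    Avg N m x j = Avg N m y j := by
  unfold Avg; exact congrArg _ (Finset.sum_congr rfl fun r _ => h _)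

/-- the normalized level-`m` component functional `Ψ` -/
def Phi (v : ℕ → ℝ) (m : ℕ) : ℝ :=
  (2:ℝ)^(((m:ℝ)-(N:ℝ))/2) * Real.sqrt (Qm N m v)

lemma Phi_nonneg (v : ℕ → ℝ) (m : ℕ) : 0 ≤ Phi N v m := by
  unfold Phi; positivity

lemma two_rpow_half (x : ℝ) : Real.sqrt ((2:ℝ)^x) = (2:ℝ)^(x/2) := by
  rw [Real.sqrt_eq_rpow, ← Real.rpow_mul (by norm_num : (0:ℝ) ≤ 2)]
  congr 1
  ring

lemma two_pow_eq_rpow (n : ℕ) : ((2:ℝ)^n) = (2:ℝ)^((n:ℝ)) :=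
  (Real.rpow_natCast 2 n).symm

/-- weak (L¹ → scale) bound for `Φ` -/
lemma Phi_le_weak {m : ℕ} (hm : m + 1 ≤ N) (v : ℕ → ℝ) :
    Phi N v m ≤ (2:ℝ)^(m+1) * ((2:ℝ)^N)⁻¹ * ∑ j ∈ Finset.range (2^N), |v j| := by
  have hS : (0:ℝ) ≤ ∑ j ∈ Finset.range (2^N), |v j| :=
    Finset.sum_nonneg fun j _ => abs_nonneg _
  have h1 : Real.sqrt (Qm N m v)
      ≤ (2:ℝ)^(((m:ℝ)+1-(N:ℝ))/2) * ∑ j ∈ Finset.range (2^N), |v j| := by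
    have h0 := Qm_le_weak N hm v
    have he : (2:ℝ)^(m+1) * ((2:ℝ)^N)⁻¹ = (2:ℝ)^((m:ℝ)+1-(N:ℝ)) := by
      rw [Real.rpow_sub (by norm_num : (0:ℝ) < 2), two_pow_eq_rpow (m+1)]
      push_cast
      rw [div_eq_mul_inv, ← Real.rpow_natCast 2 N]
    calc Real.sqrt (Qm N m v)
        ≤ Real.sqrt ((2:ℝ)^((m:ℝ)+1-(N:ℝ)) * (∑ j ∈ Finset.range (2^N), |v j|)^2) := by
          refine Real.sqrt_le_sqrt ?_
          rw [← he]; exact h0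
      _ = (2:ℝ)^(((m:ℝ)+1-(N:ℝ))/2) * ∑ j ∈ Finset.range (2^N), |v j| := by
          rw [Real.sqrt_mul (by positivity), Real.sqrt_sq hS, two_rpow_half]
  calc Phi N v m ≤ (2:ℝ)^(((m:ℝ)-(N:ℝ))/2) *
        ((2:ℝ)^(((m:ℝ)+1-(N:ℝ))/2) * ∑ j ∈ Finset.range (2^N), |v j|) := by
        unfold Phi
        exact mul_le_mul_of_nonneg_left h1 (by positivity)
    _ = (2:ℝ)^(((m:ℝ)-(N:ℝ))/2 + ((m:ℝ)+1-(N:ℝ))/2) * ∑ j ∈ Finset.range (2^N), |v j| := by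
        rw [Real.rpow_add (by norm_num : (0:ℝ) < 2)]; ring
    _ ≤ (2:ℝ)^((m:ℝ)+1-(N:ℝ)) * ∑ j ∈ Finset.range (2^N), |v j| := by
        refine mul_le_mul_of_nonneg_right ?_ hS
        refine Real.rpow_le_rpow_of_exponent_le (by norm_num) (by linarith)
    _ = (2:ℝ)^(m+1) * ((2:ℝ)^N)⁻¹ * ∑ j ∈ Finset.range (2^N), |v j| := by
        rw [Real.rpow_sub (by norm_num : (0:ℝ) < 2), two_pow_eq_rpow (m+1)]
        push_cast
        rw [div_eq_mul_inv, ← Real.rpow_natCast 2 N]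

/-- L² bound for `Φ` -/
lemma sum_Phi_sq_le (v : ℕ → ℝ) :
    ∑ m ∈ Finset.range N, ((2:ℝ)^m)⁻¹ * (Phi N v m)^2
      ≤ ((2:ℝ)^N)⁻¹ * ∑ j ∈ Finset.range (2^N), (v j)^2 := by
  have key : ∀ m ∈ Finset.range N, ((2:ℝ)^m)⁻¹ * (Phi N v m)^2 = ((2:ℝ)^N)⁻¹ * Qm N m v := by
    intro m _
    unfold Phi
    rw [mul_pow, Real.sq_sqrt (Qm_nonneg N m v)]
    have h1 : ((2:ℝ)^(((m:ℝ)-(N:ℝ))/2))^2 = (2:ℝ)^((m:ℝ)-(N:ℝ)) := by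
      rw [← Real.rpow_natCast ((2:ℝ)^(((m:ℝ)-(N:ℝ))/2)) 2,
        ← Real.rpow_mul (by norm_num : (0:ℝ) ≤ 2)]
      norm_num
    rw [h1, Real.rpow_sub (by norm_num : (0:ℝ) < 2)]
    rw [two_pow_eq_rpow m, two_pow_eq_rpow N]
    field_simp
  rw [Finset.sum_congr rfl key, ← Finset.mul_sum]
  exact mul_le_mul_of_nonneg_left (sum_Qm_le N v) (by positivity)

/-- subadditivity of `Φ` -/
lemma Phi_subadd {x u v : ℕ → ℝ} (h : ∀ j, x j = u j + v j) (m : ℕ) :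
    Phi N x m ≤ Phi N u m + Phi N v m := by
  have hD : ∀ j, Dm N m x j = Dm N m u j + Dm N m v j := by
    intro j
    have hx : ∀ mm, Avg N mm x j = Avg N mm u j + Avg N mm v j := by
      intro mm
      rw [Avg_congr N mm h j, Avg_add]
    unfold Dm; rw [hx (m+1), hx m]; ring
  have hQ : Qm N m x = ∑ j ∈ Finset.range (2^N), (Dm N m u j + Dm N m v j)^2 := by
    unfold Qm
    exact Finset.sum_congr rfl fun j _ => by rw [hD j]
  have h2 : Real.sqrt (Qm N m x) ≤ Real.sqrt (Qm N m u) + Real.sqrt (Qm N m v) := by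
    rw [hQ]
    exact sqrt_sum_sq_add _ _ _
  unfold Phi
  calc (2:ℝ)^(((m:ℝ)-(N:ℝ))/2) * Real.sqrt (Qm N m x)
      ≤ (2:ℝ)^(((m:ℝ)-(N:ℝ))/2) * (Real.sqrt (Qm N m u) + Real.sqrt (Qm N m v)) :=
        mul_le_mul_of_nonneg_left h2 (by positivity)
    _ = _ := by ring

def bigf (w : ℕ → ℝ) (ℓ : ℤ) : ℕ → ℝ := fun j => if (2:ℝ)^ℓ < |w j| then w j else 0
def smallf (w : ℕ → ℝ) (ℓ : ℤ) : ℕ → ℝ := fun j => if (2:ℝ)^ℓ < |w j| then 0 else w j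

lemma big_add_small (w : ℕ → ℝ) (ℓ : ℤ) (j : ℕ) : w j = bigf w ℓ j + smallf w ℓ j := by
  unfold bigf smallf; split_ifs <;> ring

lemma abs_bigf (w : ℕ → ℝ) (ℓ : ℤ) (j : ℕ) :
    |bigf w ℓ j| = if (2:ℝ)^ℓ < |w j| then |w j| else 0 := by
  unfold bigf; split_ifs <;> simp

lemma sq_smallf (w : ℕ → ℝ) (ℓ : ℤ) (j : ℕ) :
    (smallf w ℓ j)^2 = if (2:ℝ)^ℓ < |w j| then 0 else (w j)^2 := by
  unfold smallf; split_ifs <;> simp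

lemma inv_le_of_le_mul4 {a b c : ℝ} (ha : 0 < a) (hb : 0 < b) (h : a ≤ 4*b*c) :
    b⁻¹ ≤ 4*a⁻¹*c := by
  have he : 4*a⁻¹*c - b⁻¹ = (4*b*c - a) * (a⁻¹ * b⁻¹) := by
    field_simp
  nlinarith [mul_nonneg (sub_nonneg.2 h) (le_of_lt (mul_pos (inv_pos.2 ha) (inv_pos.2 hb)))]

/-- MAIN CLAIM C : vector-valued Marcinkiewicz bound for the dyadic square function pieces -/
theorem claimC {q : ℝ} (hq1 : 1 < q) (hq2 : q < 2) (w : ℕ → ℝ) :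
    ∑ m ∈ Finset.range N, ((2:ℝ)^m)⁻¹ * (Phi N w m)^q
      ≤ K0 q * (((2:ℝ)^N)⁻¹ * ∑ j ∈ Finset.range (2^N), |w j|^q) := by
  classical
  unfold K0
  set C1 : ℝ := (1-(2:ℝ)^(-(q-1)))⁻¹ with hC1
  set C2 : ℝ := (1-(2:ℝ)^(q-2))⁻¹ with hC2
  have hC1pos : 0 < C1 := by
    rw [hC1]
    have : (2:ℝ)^(-(q-1)) < 1 :=
      Real.rpow_lt_one_of_one_lt_of_neg (by norm_num) (by linarith)
    exact inv_pos.2 (by linarith)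
  have hC2pos : 0 < C2 := by
    rw [hC2]
    have : (2:ℝ)^(q-2) < 1 :=
      Real.rpow_lt_one_of_one_lt_of_neg (by norm_num) (by linarith)
    exact inv_pos.2 (by linarith)
  set Ew : ℝ := ((2:ℝ)^N)⁻¹ * ∑ j ∈ Finset.range (2^N), |w j|^q with hEw
  have hEwnn : 0 ≤ Ew := by
    rw [hEw]
    have : (0:ℝ) ≤ ∑ j ∈ Finset.range (2^N), |w j|^q :=
      Finset.sum_nonneg fun j _ => Real.rpow_nonneg (abs_nonneg _) q
    positivity
  -- the dyadic bracket for each positive value of Φ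
  have hexists : ∀ m, 0 < Phi N w m →
      ∃ ℓ : ℤ, (2:ℝ)^ℓ < Phi N w m ∧ Phi N w m ≤ (2:ℝ)^(ℓ+1) := by
    intro m hm
    obtain ⟨ℓ, hℓ⟩ := exists_mem_Ioc_zpow hm one_lt_two
    exact ⟨ℓ, hℓ.1, hℓ.2⟩
  set Lm : ℕ → ℤ := fun m => if h : 0 < Phi N w m then (hexists m h).choose else 0 with hLm
  have hLspec : ∀ m, 0 < Phi N w m →
      (2:ℝ)^(Lm m) < Phi N w m ∧ Phi N w m ≤ (2:ℝ)^(Lm m + 1) := by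
    intro m hm
    rw [hLm]
    simp only [dif_pos hm]
    exact (hexists m hm).choose_spec
  set P : Finset ℕ := (Finset.range N).filter (fun m => 0 < Phi N w m) with hP
  have hPsub : P ⊆ Finset.range N := Finset.filter_subset _ _
  -- step 0 : only positive terms matter
  have step0 : ∑ m ∈ Finset.range N, ((2:ℝ)^m)⁻¹ * (Phi N w m)^q
      = ∑ m ∈ P, ((2:ℝ)^m)⁻¹ * (Phi N w m)^q := by
    rw [hP]
    rw [← Finset.sum_filter_add_sum_filter_not (Finset.range N) (fun m => 0 < Phi N w m)]
    have hz : ∑ m ∈ (Finset.range N).filter (fun m => ¬ 0 < Phi N w m),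
        ((2:ℝ)^m)⁻¹ * (Phi N w m)^q = 0 := by
      refine Finset.sum_eq_zero fun m hm => ?_
      rw [Finset.mem_filter] at hm
      have h0 : Phi N w m = 0 := le_antisymm (not_lt.1 hm.2) (Phi_nonneg N w m)
      rw [h0, Real.zero_rpow (by linarith), mul_zero]
    rw [hz, add_zero]
  -- step 1 : replace Φ by its dyadic bracket
  have step1 : ∑ m ∈ P, ((2:ℝ)^m)⁻¹ * (Phi N w m)^q
      ≤ (2:ℝ)^q * ∑ m ∈ P, ((2:ℝ)^m)⁻¹ * ((2:ℝ)^(Lm m))^q := by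
    rw [Finset.mul_sum]
    refine Finset.sum_le_sum fun m hm => ?_
    rw [hP, Finset.mem_filter] at hm
    have hup := (hLspec m hm.2).2
    have h2L : (2:ℝ)^(Lm m + 1) = 2 * (2:ℝ)^(Lm m) := by
      rw [zpow_add₀ (two_ne_zero : (2:ℝ) ≠ 0), zpow_one]; ring
    have hΦq : (Phi N w m)^q ≤ (2:ℝ)^q * ((2:ℝ)^(Lm m))^q := by
      calc (Phi N w m)^q ≤ ((2:ℝ)^(Lm m + 1))^q :=
            Real.rpow_le_rpow (Phi_nonneg N w m) hup (by linarith)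
        _ = (2:ℝ)^q * ((2:ℝ)^(Lm m))^q := by
            rw [h2L, Real.mul_rpow (by norm_num) (le_of_lt (zpow_pos (by norm_num) _))]
    calc ((2:ℝ)^m)⁻¹ * (Phi N w m)^q ≤ ((2:ℝ)^m)⁻¹ * ((2:ℝ)^q * ((2:ℝ)^(Lm m))^q) :=
          mul_le_mul_of_nonneg_left hΦq (by positivity)
      _ = (2:ℝ)^q * (((2:ℝ)^m)⁻¹ * ((2:ℝ)^(Lm m))^q) := by ring
  -- split into the parts where the big/small truncation dominates
  set Acond : ℕ → Prop := fun m => (2:ℝ)^(Lm m)/2 ≤ Phi N (bigf w (Lm m)) m with hAcond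
  set PA : Finset ℕ := P.filter (fun m => Acond m) with hPA
  set PB : Finset ℕ := P.filter (fun m => ¬ Acond m) with hPB
  have hsplit : ∑ m ∈ P, ((2:ℝ)^m)⁻¹ * ((2:ℝ)^(Lm m))^q
      = ∑ m ∈ PA, ((2:ℝ)^m)⁻¹ * ((2:ℝ)^(Lm m))^q
        + ∑ m ∈ PB, ((2:ℝ)^m)⁻¹ * ((2:ℝ)^(Lm m))^q := by
    rw [hPA, hPB, Finset.sum_filter_add_sum_filter_not]
  have hBcond : ∀ m ∈ PB, (2:ℝ)^(Lm m)/2 ≤ Phi N (smallf w (Lm m)) m := by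
    intro m hm
    rw [hPB, Finset.mem_filter] at hm
    obtain ⟨hmP, hnA⟩ := hm
    rw [hP, Finset.mem_filter] at hmP
    have hlow := (hLspec m hmP.2).1
    have hsub := Phi_subadd N (big_add_small w (Lm m)) m
    rw [hAcond] at hnA
    push_neg at hnA
    linarith
  set E1 : ℤ → ℝ := fun ℓ => ((2:ℝ)^N)⁻¹ * ∑ j ∈ Finset.range (2^N), |bigf w ℓ j| with hE1
  have hE1nn : ∀ ℓ, 0 ≤ E1 ℓ := by
    intro ℓ
    rw [hE1]
    have : (0:ℝ) ≤ ∑ j ∈ Finset.range (2^N), |bigf w ℓ j| :=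
      Finset.sum_nonneg fun j _ => abs_nonneg _
    positivity
  -- A part
  have hApart : ∑ m ∈ PA, ((2:ℝ)^m)⁻¹ * ((2:ℝ)^(Lm m))^q ≤ 8*C1*Ew := by
    have hmaps : ∀ m ∈ PA, Lm m ∈ PA.image Lm := fun m hm => Finset.mem_image_of_mem Lm hm
    rw [← Finset.sum_fiberwise_of_maps_to hmaps (fun m => ((2:ℝ)^m)⁻¹ * ((2:ℝ)^(Lm m))^q)]
    have hfiber : ∀ ℓ ∈ PA.image Lm,
        ∑ m ∈ PA.filter (fun m => Lm m = ℓ), ((2:ℝ)^m)⁻¹ * ((2:ℝ)^(Lm m))^q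
          ≤ ((2:ℝ)^ℓ)^q * (2*(4 * ((2:ℝ)^ℓ)⁻¹ * E1 ℓ)) := by
      intro ℓ _
      have hterm : ∀ m ∈ PA.filter (fun m => Lm m = ℓ),
          ((2:ℝ)^m)⁻¹ * ((2:ℝ)^(Lm m))^q = ((2:ℝ)^ℓ)^q * ((2:ℝ)^m)⁻¹ := by
        intro m hm
        rw [(Finset.mem_filter.1 hm).2]; ring
      rw [Finset.sum_congr rfl hterm, ← Finset.mul_sum]
      refine mul_le_mul_of_nonneg_left ?_ (by positivity)
      refine sum_pow2_inv_le _ ?_ ?_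
      · have := hE1nn ℓ
        have h2ℓ : (0:ℝ) < (2:ℝ)^ℓ := zpow_pos (by norm_num) ℓ
        positivity
      · intro m hm
        rw [Finset.mem_filter] at hm
        obtain ⟨hmPA, hLmℓ⟩ := hm
        rw [hPA, Finset.mem_filter] at hmPA
        obtain ⟨hmP, hA⟩ := hmPA
        have hm1 : m + 1 ≤ N := Finset.mem_range.1 (hPsub hmP)
        rw [hAcond] at hA
        rw [hLmℓ] at hA
        have hweak := Phi_le_weak N hm1 (bigf w ℓ)
        have heq : (2:ℝ)^(m+1) * ((2:ℝ)^N)⁻¹ * ∑ j ∈ Finset.range (2^N), |bigf w ℓ j|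
            = 2*((2:ℝ)^m * E1 ℓ) := by
          rw [hE1, pow_succ]; ring
        have h4 : (2:ℝ)^ℓ ≤ 4*(2:ℝ)^m*(E1 ℓ) := by
          rw [heq] at hweak
          linarith
        exact inv_le_of_le_mul4 (zpow_pos (by norm_num) ℓ) (by positivity) h4
    refine le_trans (Finset.sum_le_sum hfiber) ?_
    have hstep : ∀ ℓ ∈ PA.image Lm, ((2:ℝ)^ℓ)^q * (2*(4 * ((2:ℝ)^ℓ)⁻¹ * E1 ℓ))
        = 8*((2:ℝ)^N)⁻¹ * ∑ j ∈ Finset.range (2^N), ((2:ℝ)^ℓ)^(q-1) * |bigf w ℓ j| := by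
      intro ℓ _
      have hsplit2 : ((2:ℝ)^ℓ)^q * ((2:ℝ)^ℓ)⁻¹ = ((2:ℝ)^ℓ)^(q-1) := by
        rw [Real.rpow_sub (zpow_pos (by norm_num) ℓ), Real.rpow_one, div_eq_mul_inv]
      calc ((2:ℝ)^ℓ)^q * (2*(4 * ((2:ℝ)^ℓ)⁻¹ * E1 ℓ))
          = (((2:ℝ)^ℓ)^q * ((2:ℝ)^ℓ)⁻¹) * 8 * E1 ℓ := by ring
        _ = ((2:ℝ)^ℓ)^(q-1) * 8 * E1 ℓ := by rw [hsplit2]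
        _ = 8*((2:ℝ)^N)⁻¹ * (((2:ℝ)^ℓ)^(q-1) * ∑ j ∈ Finset.range (2^N), |bigf w ℓ j|) := by
            rw [hE1]; ring
        _ = 8*((2:ℝ)^N)⁻¹ * ∑ j ∈ Finset.range (2^N), ((2:ℝ)^ℓ)^(q-1) * |bigf w ℓ j| := by
            rw [Finset.mul_sum]
    rw [Finset.sum_congr rfl hstep, ← Finset.mul_sum, Finset.sum_comm]
    have hj : ∀ j ∈ Finset.range (2^N),
        ∑ ℓ ∈ PA.image Lm, ((2:ℝ)^ℓ)^(q-1) * |bigf w ℓ j| ≤ C1 * |w j|^q := by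
      intro j _
      have hrw : ∀ ℓ ∈ PA.image Lm, ((2:ℝ)^ℓ)^(q-1) * |bigf w ℓ j|
          = |w j| * (if (2:ℝ)^ℓ < |w j| then ((2:ℝ)^ℓ)^(q-1) else 0) := by
        intro ℓ _
        rw [abs_bigf]
        split_ifs <;> ring
      rw [Finset.sum_congr rfl hrw, ← Finset.mul_sum]
      rcases eq_or_lt_of_le (abs_nonneg (w j)) with h0 | h0
      · rw [← h0, Real.zero_rpow (by linarith : q ≠ 0), zero_mul, mul_zero]
      · have hg := grid_sum_lt (α := q-1) (by linarith) h0 (PA.image Lm)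
        have he : |w j| * (|w j|^(q-1) * C1) = C1 * |w j|^q := by
          have e1 : |w j| * |w j|^(q-1) = |w j|^(1+(q-1)) := by
            rw [Real.rpow_add h0, Real.rpow_one]
          have e2 : (1:ℝ)+(q-1) = q := by ring
          calc |w j| * (|w j|^(q-1) * C1) = (|w j| * |w j|^(q-1)) * C1 := by ring
            _ = |w j|^(1+(q-1)) * C1 := by rw [e1]
            _ = C1 * |w j|^q := by rw [e2]; ring
        calc |w j| * ∑ ℓ ∈ PA.image Lm, (if (2:ℝ)^ℓ < |w j| then ((2:ℝ)^ℓ)^(q-1) else 0)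
            ≤ |w j| * (|w j|^(q-1) * C1) := by
              refine mul_le_mul_of_nonneg_left ?_ (abs_nonneg _)
              rw [hC1]
              exact hg
          _ = C1 * |w j|^q := he
    calc 8*((2:ℝ)^N)⁻¹ * ∑ j ∈ Finset.range (2^N), ∑ ℓ ∈ PA.image Lm,
            ((2:ℝ)^ℓ)^(q-1) * |bigf w ℓ j|
        ≤ 8*((2:ℝ)^N)⁻¹ * ∑ j ∈ Finset.range (2^N), C1 * |w j|^q := by
          refine mul_le_mul_of_nonneg_left (Finset.sum_le_sum hj) (by positivity)
      _ = 8*C1*Ew := by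
          rw [hEw, ← Finset.mul_sum]; ring
  -- B part
  have hBpart : ∑ m ∈ PB, ((2:ℝ)^m)⁻¹ * ((2:ℝ)^(Lm m))^q ≤ 4*C2*Ew := by
    have hterm : ∀ m ∈ PB, ((2:ℝ)^m)⁻¹ * ((2:ℝ)^(Lm m))^q
        ≤ 4 * (((2:ℝ)^(Lm m))^(q-2) * (((2:ℝ)^m)⁻¹ * (Phi N (smallf w (Lm m)) m)^2)) := by
      intro m hm
      have hB := hBcond m hm
      have h2L : (0:ℝ) < (2:ℝ)^(Lm m) := zpow_pos (by norm_num) _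
      have hsq : ((2:ℝ)^(Lm m))^2 ≤ 4 * (Phi N (smallf w (Lm m)) m)^2 := by nlinarith
      have hdecomp : ((2:ℝ)^(Lm m))^q = ((2:ℝ)^(Lm m))^(q-2) * ((2:ℝ)^(Lm m))^2 := by
        rw [← Real.rpow_natCast ((2:ℝ)^(Lm m)) 2, ← Real.rpow_add h2L]
        norm_num
      calc ((2:ℝ)^m)⁻¹ * ((2:ℝ)^(Lm m))^q
          = ((2:ℝ)^(Lm m))^(q-2) * (((2:ℝ)^m)⁻¹ * ((2:ℝ)^(Lm m))^2) := by
            rw [hdecomp]; ring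
        _ ≤ ((2:ℝ)^(Lm m))^(q-2) * (((2:ℝ)^m)⁻¹ * (4 * (Phi N (smallf w (Lm m)) m)^2)) := by
            refine mul_le_mul_of_nonneg_left ?_ (by positivity)
            exact mul_le_mul_of_nonneg_left hsq (by positivity)
        _ = 4 * (((2:ℝ)^(Lm m))^(q-2) * (((2:ℝ)^m)⁻¹ * (Phi N (smallf w (Lm m)) m)^2)) := by
            ring
    refine le_trans (Finset.sum_le_sum hterm) ?_
    have hmaps : ∀ m ∈ PB, Lm m ∈ PB.image Lm := fun m hm => Finset.mem_image_of_mem Lm hm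
    rw [← Finset.sum_fiberwise_of_maps_to hmaps
      (fun m => 4 * (((2:ℝ)^(Lm m))^(q-2) * (((2:ℝ)^m)⁻¹ * (Phi N (smallf w (Lm m)) m)^2)))]
    have hfiber : ∀ ℓ ∈ PB.image Lm,
        ∑ m ∈ PB.filter (fun m => Lm m = ℓ),
            4 * (((2:ℝ)^(Lm m))^(q-2) * (((2:ℝ)^m)⁻¹ * (Phi N (smallf w (Lm m)) m)^2))
          ≤ 4 * ((2:ℝ)^ℓ)^(q-2) *
              (((2:ℝ)^N)⁻¹ * ∑ j ∈ Finset.range (2^N), (smallf w ℓ j)^2) := by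
      intro ℓ _
      have hterm2 : ∀ m ∈ PB.filter (fun m => Lm m = ℓ),
          4 * (((2:ℝ)^(Lm m))^(q-2) * (((2:ℝ)^m)⁻¹ * (Phi N (smallf w (Lm m)) m)^2))
            = 4 * ((2:ℝ)^ℓ)^(q-2) * (((2:ℝ)^m)⁻¹ * (Phi N (smallf w ℓ) m)^2) := by
        intro m hm
        rw [(Finset.mem_filter.1 hm).2]; ring
      rw [Finset.sum_congr rfl hterm2, ← Finset.mul_sum]
      refine mul_le_mul_of_nonneg_left ?_ (by positivity)
      refine le_trans ?_ (sum_Phi_sq_le N (smallf w ℓ))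
      refine Finset.sum_le_sum_of_subset_of_nonneg ?_ ?_
      · intro m hm
        exact hPsub (Finset.mem_filter.1 ((Finset.mem_filter.1 hm).1)).1
      · intro m _ _
        positivity
    refine le_trans (Finset.sum_le_sum hfiber) ?_
    have hstep : ∀ ℓ ∈ PB.image Lm,
        4 * ((2:ℝ)^ℓ)^(q-2) * (((2:ℝ)^N)⁻¹ * ∑ j ∈ Finset.range (2^N), (smallf w ℓ j)^2)
          = 4*((2:ℝ)^N)⁻¹ * ∑ j ∈ Finset.range (2^N),
              (w j)^2 * (if |w j| ≤ (2:ℝ)^ℓ then ((2:ℝ)^ℓ)^(q-2) else 0) := by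
      intro ℓ _
      have hper : ∀ j ∈ Finset.range (2^N), ((2:ℝ)^ℓ)^(q-2) * (smallf w ℓ j)^2
          = (w j)^2 * (if |w j| ≤ (2:ℝ)^ℓ then ((2:ℝ)^ℓ)^(q-2) else 0) := by
        intro j _
        rw [sq_smallf]
        by_cases hc : (2:ℝ)^ℓ < |w j|
        · rw [if_pos hc, if_neg (not_le.2 hc)]; ring
        · rw [if_neg hc, if_pos (not_lt.1 hc)]; ring
      calc 4 * ((2:ℝ)^ℓ)^(q-2) * (((2:ℝ)^N)⁻¹ * ∑ j ∈ Finset.range (2^N), (smallf w ℓ j)^2)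
          = 4*((2:ℝ)^N)⁻¹ * ∑ j ∈ Finset.range (2^N), ((2:ℝ)^ℓ)^(q-2) * (smallf w ℓ j)^2 := by
            simp only [Finset.mul_sum]
            exact Finset.sum_congr rfl fun j _ => by ring
        _ = 4*((2:ℝ)^N)⁻¹ * ∑ j ∈ Finset.range (2^N),
              (w j)^2 * (if |w j| ≤ (2:ℝ)^ℓ then ((2:ℝ)^ℓ)^(q-2) else 0) := by
            rw [Finset.sum_congr rfl hper]
    rw [Finset.sum_congr rfl hstep, ← Finset.mul_sum, Finset.sum_comm]
    have hj : ∀ j ∈ Finset.range (2^N),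
        ∑ ℓ ∈ PB.image Lm, (w j)^2 * (if |w j| ≤ (2:ℝ)^ℓ then ((2:ℝ)^ℓ)^(q-2) else 0)
          ≤ C2 * |w j|^q := by
      intro j _
      rw [← Finset.mul_sum]
      rcases eq_or_lt_of_le (abs_nonneg (w j)) with h0 | h0
      · have hw0 : w j = 0 := abs_eq_zero.1 h0.symm
        rw [hw0]
        rw [abs_zero, Real.zero_rpow (by linarith : q ≠ 0), mul_zero]
        norm_num
      · have hg := grid_sum_ge (β := q-2) (by linarith) h0 (PB.image Lm)
        have he : (w j)^2 * (|w j|^(q-2) * C2) = C2 * |w j|^q := by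
          have e0 : (w j)^2 = |w j|^2 := (sq_abs (w j)).symm
          have e1 : |w j|^2 * |w j|^(q-2) = |w j|^((2:ℝ)+(q-2)) := by
            rw [← Real.rpow_natCast |w j| 2, ← Real.rpow_add h0]
            norm_num
          have e2 : (2:ℝ)+(q-2) = q := by ring
          calc (w j)^2 * (|w j|^(q-2) * C2) = (|w j|^2 * |w j|^(q-2)) * C2 := by
                rw [e0]; ring
            _ = |w j|^((2:ℝ)+(q-2)) * C2 := by rw [e1]
            _ = C2 * |w j|^q := by rw [e2]; ring
        calc (w j)^2 * ∑ ℓ ∈ PB.image Lm, (if |w j| ≤ (2:ℝ)^ℓ then ((2:ℝ)^ℓ)^(q-2) else 0)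
            ≤ (w j)^2 * (|w j|^(q-2) * C2) := by
              refine mul_le_mul_of_nonneg_left ?_ (sq_nonneg _)
              rw [hC2]
              exact hg
          _ = C2 * |w j|^q := he
    calc 4*((2:ℝ)^N)⁻¹ * ∑ j ∈ Finset.range (2^N), ∑ ℓ ∈ PB.image Lm,
            (w j)^2 * (if |w j| ≤ (2:ℝ)^ℓ then ((2:ℝ)^ℓ)^(q-2) else 0)
        ≤ 4*((2:ℝ)^N)⁻¹ * ∑ j ∈ Finset.range (2^N), C2 * |w j|^q := by
          refine mul_le_mul_of_nonneg_left (Finset.sum_le_sum hj) (by positivity)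
      _ = 4*C2*Ew := by
          rw [hEw, ← Finset.mul_sum]; ring
  -- combine everything
  have h2q : (0:ℝ) ≤ (2:ℝ)^q := le_of_lt (Real.rpow_pos_of_pos (by norm_num) q)
  calc ∑ m ∈ Finset.range N, ((2:ℝ)^m)⁻¹ * (Phi N w m)^q
      = ∑ m ∈ P, ((2:ℝ)^m)⁻¹ * (Phi N w m)^q := step0
    _ ≤ (2:ℝ)^q * ∑ m ∈ P, ((2:ℝ)^m)⁻¹ * ((2:ℝ)^(Lm m))^q := step1
    _ = (2:ℝ)^q * (∑ m ∈ PA, ((2:ℝ)^m)⁻¹ * ((2:ℝ)^(Lm m))^q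
          + ∑ m ∈ PB, ((2:ℝ)^m)⁻¹ * ((2:ℝ)^(Lm m))^q) := by rw [hsplit]
    _ ≤ (2:ℝ)^q * (8*C1*Ew + 4*C2*Ew) := by
        refine mul_le_mul_of_nonneg_left (add_le_add hApart hBpart) h2q
    _ = (2:ℝ)^q * (8*C1 + 4*C2) * Ew := by ring



def Hm (p : ℝ) (a : ℕ → ℕ → ℝ) (m : ℕ) (j : ℕ) : ℝ :=
  ∑ i ∈ Finset.Icc 1 (2^m), a m i * (2:ℝ)^((m:ℝ)/p) * hK i (j / 2^(N-(m+1)))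

def Ff (p : ℝ) (a : ℕ → ℕ → ℝ) (j : ℕ) : ℝ := ∑ m ∈ Finset.range N, Hm N p a m j

lemma Avg_of_const_blocks (m : ℕ) (g : ℕ → ℝ) (j : ℕ) :
    Avg N m (fun x => g (x / 2^(N-m))) j = g (j / 2^(N-m)) := by
  have hb : (0:ℕ) < 2^(N-m) := Nat.pow_pos (by norm_num)
  unfold Avg
  have h1 : ∀ r ∈ Finset.range (2^(N-m)),
      g ((j / 2^(N-m) * 2^(N-m) + r) / 2^(N-m)) = g (j / 2^(N-m)) := by
    intro r hr
    rw [div_mul_add_div hb (Finset.mem_range.1 hr)]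
  rw [Finset.sum_congr rfl h1, Finset.sum_const, Finset.card_range, nsmul_eq_mul, ← mul_assoc]
  push_cast
  rw [inv_mul_cancel₀ (by positivity), one_mul]

lemma S1 {p : ℝ} {a : ℕ → ℕ → ℝ} {m : ℕ} (j : ℕ) :
    Avg N (m+1) (Hm N p a m) j = Hm N p a m j :=
  Avg_of_const_blocks N (m+1)
    (fun k => ∑ i ∈ Finset.Icc 1 (2^m), a m i * (2:ℝ)^((m:ℝ)/p) * hK i k) j

lemma S2 {p : ℝ} {a : ℕ → ℕ → ℝ} {m : ℕ} (hm : m + 1 ≤ N) (j : ℕ) :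
    Avg N m (Hm N p a m) j = 0 := by
  have hbpos : (0:ℕ) < 2^(N-(m+1)) := Nat.pow_pos (by norm_num)
  have hb : (2:ℕ)^(N-m) = 2 * 2^(N-(m+1)) := by
    rw [← pow_succ']; congr 1; omega
  have hKey : ∑ r ∈ Finset.range (2^(N-m)), Hm N p a m (j / 2^(N-m) * 2^(N-m) + r) = 0 := by
    set b := (2:ℕ)^(N-(m+1)) with hbdef
    set B := j / 2^(N-m) * 2^(N-m) with hB
    have hr : ∀ s r', r' < b → (B + (s*b + r')) / b = 2*(j / 2^(N-m)) + s := by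
      intro s r' hr'
      have e : B + (s*b + r') = (2*(j / 2^(N-m)) + s)*b + r' := by
        rw [hB, hb]; ring
      rw [e, div_mul_add_div hbpos hr']
    rw [hb, sum_range_mul_eq]
    have hinner : ∀ s ∈ Finset.range 2,
        ∑ r' ∈ Finset.range b, Hm N p a m (B + (s*b + r'))
          = (b:ℝ) * ∑ i ∈ Finset.Icc 1 (2^m),
              a m i * (2:ℝ)^((m:ℝ)/p) * hK i (2*(j / 2^(N-m)) + s) := by
      intro s _
      have h2 : ∀ r' ∈ Finset.range b, Hm N p a m (B + (s*b + r'))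
          = ∑ i ∈ Finset.Icc 1 (2^m),
              a m i * (2:ℝ)^((m:ℝ)/p) * hK i (2*(j / 2^(N-m)) + s) := by
        intro r' hr'
        unfold Hm
        rw [hr s r' (Finset.mem_range.1 hr')]
      rw [Finset.sum_congr rfl h2, Finset.sum_const, Finset.card_range, nsmul_eq_mul]
    rw [Finset.sum_congr rfl hinner]
    rw [Finset.sum_range_succ, Finset.sum_range_one, add_zero]
    rw [← mul_add, ← Finset.sum_add_distrib]
    have hz : ∑ i ∈ Finset.Icc 1 (2^m), (a m i * (2:ℝ)^((m:ℝ)/p) * hK i (2*(j / 2^(N-m)))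
        + a m i * (2:ℝ)^((m:ℝ)/p) * hK i (2*(j / 2^(N-m)) + 1)) = 0 := by
      refine Finset.sum_eq_zero fun i _ => ?_
      rw [← mul_add, hK_pair, mul_zero]
    rw [hz, mul_zero]
  unfold Avg
  rw [hKey, mul_zero]

lemma hK_orth {i i' k : ℕ} (h : i ≠ i') : hK i k * hK i' k = 0 := by
  by_cases h1 : hK i k = 0
  · rw [h1, zero_mul]
  by_cases h2 : hK i' k = 0
  · rw [h2, mul_zero]
  exfalso
  rcases hK_ne_zero h1 with ha | ha <;> rcases hK_ne_zero h2 with hb | hb <;> omega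

lemma sq_sum_of_orth (s : Finset ℕ) (f : ℕ → ℝ)
    (h : ∀ i ∈ s, ∀ i' ∈ s, i ≠ i' → f i * f i' = 0) :
    (∑ i ∈ s, f i)^2 = ∑ i ∈ s, (f i)^2 := by
  rw [sq, Finset.sum_mul_sum]
  refine Finset.sum_congr rfl fun i hi => ?_
  rw [Finset.sum_eq_single_of_mem i hi (fun b hb hbi => h i hi b hb (Ne.symm hbi))]
  exact (sq (f i)).symm

lemma hK_sq_le (i k : ℕ) : (hK i k)^2
    ≤ (if k+2 = 2*i then (1:ℝ) else 0) + (if k+1 = 2*i then (1:ℝ) else 0) := by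
  unfold hK
  split_ifs <;> norm_num

lemma sum_ind_le (s : Finset ℕ) (c : ℕ) :
    ∑ k ∈ s, (if k = c then (1:ℝ) else 0) ≤ 1 := by
  rw [Finset.sum_ite_eq' s c (fun _ => (1:ℝ))]
  split_ifs <;> norm_num

lemma hK_sq_sum {i : ℕ} (hi : 1 ≤ i) (s : Finset ℕ) : ∑ k ∈ s, (hK i k)^2 ≤ 2 := by
  refine le_trans (Finset.sum_le_sum (fun k _ => hK_sq_le i k)) ?_
  rw [Finset.sum_add_distrib]
  have e1 : ∀ k ∈ s, (if k+2 = 2*i then (1:ℝ) else 0) = (if k = 2*i-2 then (1:ℝ) else 0) := by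
    intro k _
    by_cases h : k+2 = 2*i
    · rw [if_pos h, if_pos (by omega)]
    · rw [if_neg h, if_neg (by omega)]
  have e2 : ∀ k ∈ s, (if k+1 = 2*i then (1:ℝ) else 0) = (if k = 2*i-1 then (1:ℝ) else 0) := by
    intro k _
    by_cases h : k+1 = 2*i
    · rw [if_pos h, if_pos (by omega)]
    · rw [if_neg h, if_neg (by omega)]
  rw [Finset.sum_congr rfl e1, Finset.sum_congr rfl e2]
  have i1 := sum_ind_le s (2*i-2)
  have i2 := sum_ind_le s (2*i-1)
  linarith

lemma S3 {p : ℝ} {a : ℕ → ℕ → ℝ} {m : ℕ} (hm : m + 1 ≤ N) :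
    ∑ j ∈ Finset.range (2^N), (Hm N p a m j)^2
      ≤ (2:ℝ)^(N-m) * ((2:ℝ)^((m:ℝ)/p))^2 * ∑ i ∈ Finset.Icc 1 (2^m), (a m i)^2 := by
  have hb2 : (2:ℝ)^(N-m) = 2 * (2:ℝ)^(N-(m+1)) := by
    rw [← pow_succ']; congr 1; omega
  set c := (2:ℝ)^((m:ℝ)/p) with hc
  have hsq : ∀ j ∈ Finset.range (2^N), (Hm N p a m j)^2
      = ∑ i ∈ Finset.Icc 1 (2^m), (a m i * c * hK i (j / 2^(N-(m+1))))^2 := by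
    intro j _
    unfold Hm
    refine sq_sum_of_orth _ _ ?_
    intro i hi i' hi' hne
    have horth := hK_orth (k := j / 2^(N-(m+1))) hne
    calc (a m i * c * hK i (j / 2^(N-(m+1)))) * (a m i' * c * hK i' (j / 2^(N-(m+1))))
        = (a m i * c * (a m i' * c)) * (hK i (j / 2^(N-(m+1))) * hK i' (j / 2^(N-(m+1)))) := by
          ring
      _ = 0 := by rw [horth, mul_zero]
  rw [Finset.sum_congr rfl hsq, Finset.sum_comm]
  have hin : ∀ i ∈ Finset.Icc 1 (2^m),
      ∑ j ∈ Finset.range (2^N), (a m i * c * hK i (j / 2^(N-(m+1))))^2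
        ≤ (a m i)^2 * c^2 * ((2:ℝ)^(N-(m+1)) * 2) := by
    intro i hi
    have hi1 : 1 ≤ i := (Finset.mem_Icc.1 hi).1
    have hkey : ∑ j ∈ Finset.range (2^N), (hK i (j / 2^(N-(m+1))))^2
        ≤ (2:ℝ)^(N-(m+1)) * 2 := by
      rw [sum_blocks N hm (fun j => (hK i (j / 2^(N-(m+1))))^2)]
      have hper : ∀ k ∈ Finset.range (2^(m+1)), ∑ r ∈ Finset.range (2^(N-(m+1))),
          (hK i ((k * 2^(N-(m+1)) + r) / 2^(N-(m+1))))^2 = (2:ℝ)^(N-(m+1)) * (hK i k)^2 := by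
        intro k _
        have h2 : ∀ r ∈ Finset.range (2^(N-(m+1))),
            (hK i ((k * 2^(N-(m+1)) + r) / 2^(N-(m+1))))^2 = (hK i k)^2 := by
          intro r hr
          rw [div_mul_add_div (Nat.pow_pos (by norm_num)) (Finset.mem_range.1 hr)]
        rw [Finset.sum_congr rfl h2, Finset.sum_const, Finset.card_range, nsmul_eq_mul]
        push_cast
        ring
      rw [Finset.sum_congr rfl hper, ← Finset.mul_sum]
      exact mul_le_mul_of_nonneg_left (hK_sq_sum hi1 _) (by positivity)
    calc ∑ j ∈ Finset.range (2^N), (a m i * c * hK i (j / 2^(N-(m+1))))^2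
        = (a m i)^2 * c^2 * ∑ j ∈ Finset.range (2^N), (hK i (j / 2^(N-(m+1))))^2 := by
          rw [Finset.mul_sum]
          exact Finset.sum_congr rfl fun j _ => by ring
      _ ≤ (a m i)^2 * c^2 * ((2:ℝ)^(N-(m+1)) * 2) := by
          refine mul_le_mul_of_nonneg_left hkey (by positivity)
  refine le_trans (Finset.sum_le_sum hin) (le_of_eq ?_)
  rw [hb2, Finset.mul_sum]
  exact Finset.sum_congr rfl fun i _ => by ring

theorem discrete_main {p q : ℝ} (hp : 2 < p) (hq : q = p/(p-1)) (a : ℕ → ℕ → ℝ) :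
    ((2:ℝ)^N)⁻¹ * ∑ j ∈ Finset.range (2^N), |Ff N p a j|^p
      ≤ (K0 q)^(p/q) * ∑ m ∈ Finset.range N, (∑ i ∈ Finset.Icc 1 (2^m), (a m i)^2)^(p/2) := by
  have hp0 : (0:ℝ) < p := by linarith
  have hp1 : (1:ℝ) < p := by linarith
  have hpm1 : (0:ℝ) < p - 1 := by linarith
  have hpne : p ≠ 0 := ne_of_gt hp0
  have hpm1ne : p - 1 ≠ 0 := ne_of_gt hpm1
  have hq1 : 1 < q := by rw [hq]; rw [lt_div_iff₀ hpm1]; linarith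
  have hq2 : q < 2 := by rw [hq]; rw [div_lt_iff₀ hpm1]; linarith
  have hq0 : (0:ℝ) < q := by linarith
  have hqne : q ≠ 0 := ne_of_gt hq0
  have hpqconj : p⁻¹ + q⁻¹ = 1 := by rw [hq]; field_simp; ring
  have hinvpq : 1/p + 1/q = 1 := by rw [one_div, one_div]; exact hpqconj
  have hpq2 : (p-1)*q = p := by rw [hq]; field_simp
  have hK0pos : 0 < K0 q := K0_pos hq1 hq2
  set F : ℕ → ℝ := Ff N p a with hF
  set G : ℕ → ℝ := fun j => |F j|^(p-2) * F j with hG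
  set X : ℝ := ∑ j ∈ Finset.range (2^N), |F j|^p with hX
  have hXnn : 0 ≤ X := Finset.sum_nonneg fun j _ => Real.rpow_nonneg (abs_nonneg _) p
  set Bm : ℕ → ℝ := fun m => ∑ i ∈ Finset.Icc 1 (2^m), (a m i)^2 with hBm
  have hBnn : ∀ m, 0 ≤ Bm m := fun m => Finset.sum_nonneg fun i _ => sq_nonneg _
  set R : ℝ := ∑ m ∈ Finset.range N, (Bm m)^(p/2) with hR
  have hRnn : 0 ≤ R := Finset.sum_nonneg fun m _ => Real.rpow_nonneg (hBnn m) _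
  -- (a) F * G = |F|^p pointwise
  have hFG : ∀ j, F j * G j = |F j|^p := by
    intro j
    rw [hG]
    by_cases hz : F j = 0
    · rw [hz, zero_mul, abs_zero, Real.zero_rpow hpne]
    · have habs : 0 < |F j| := abs_pos.2 hz
      have e1 : F j * (|F j|^(p-2) * F j) = |F j|^(p-2) * (|F j| * |F j|) := by
        rw [abs_mul_abs_self]; ring
      rw [e1]
      rw [show |F j| * |F j| = |F j|^(1:ℝ) * |F j|^(1:ℝ) by rw [Real.rpow_one]]
      rw [← Real.rpow_add habs, ← Real.rpow_add habs]
      norm_num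
  -- (b) |G|^q = |F|^p pointwise
  have hGq : ∀ j, |G j|^q = |F j|^p := by
    intro j
    have hGj : G j = |F j|^(p-2) * F j := rfl
    by_cases hz : F j = 0
    · rw [hGj, hz, mul_zero, abs_zero, Real.zero_rpow hqne, Real.zero_rpow hpne]
    · have habs : 0 < |F j| := abs_pos.2 hz
      have e1 : |G j| = |F j|^(p-2) * |F j| := by
        rw [hGj, abs_mul, abs_of_nonneg (Real.rpow_nonneg (abs_nonneg _) _)]
      have e2 : |F j|^(p-2) * |F j| = |F j|^(p-2+1) := by
        nth_rewrite 2 [show |F j| = |F j|^(1:ℝ) by rw [Real.rpow_one]]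
        rw [← Real.rpow_add habs]
      have e3 : (|F j|^(p-2+1))^q = |F j|^((p-2+1)*q) := by
        rw [← Real.rpow_mul (abs_nonneg (F j))]
      have e4 : (p - 2 + 1) * q = p := by
        have e5 : p - 2 + 1 = p - 1 := by ring
        rw [e5, hpq2]
      rw [e1, e2, e3, e4]
  have hsumGq : ∑ j ∈ Finset.range (2^N), |G j|^q = X := by
    rw [hX]; exact Finset.sum_congr rfl fun j _ => hGq j
  -- duality decomposition
  have hD1 : ∑ j ∈ Finset.range (2^N), F j * G j
      = ∑ m ∈ Finset.range N, ∑ j ∈ Finset.range (2^N), Hm N p a m j * G j := by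
    rw [Finset.sum_comm]
    refine Finset.sum_congr rfl fun j _ => ?_
    rw [hF]
    show Ff N p a j * G j = _
    rw [Ff, Finset.sum_mul]
  have hD2 : ∀ m ∈ Finset.range N, ∑ j ∈ Finset.range (2^N), Hm N p a m j * G j
      = ∑ j ∈ Finset.range (2^N), Hm N p a m j * Dm N m G j := by
    intro m hm
    have hm1 : m + 1 ≤ N := Finset.mem_range.1 hm
    have e1 : ∑ j ∈ Finset.range (2^N), Hm N p a m j * G j
        = ∑ j ∈ Finset.range (2^N), Hm N p a m j * Avg N (m+1) G j := by
      have h := Avg_selfadjoint N hm1 (Hm N p a m) G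
      have h2 : ∑ j ∈ Finset.range (2^N), Avg N (m+1) (Hm N p a m) j * G j
          = ∑ j ∈ Finset.range (2^N), Hm N p a m j * G j :=
        Finset.sum_congr rfl fun j _ => by rw [S1]
      rw [← h2, h]
    have e2 : ∑ j ∈ Finset.range (2^N), Hm N p a m j * Avg N m G j = 0 := by
      have h := Avg_selfadjoint N (le_trans (Nat.le_succ m) hm1) (Hm N p a m) G
      rw [← h]
      refine Finset.sum_eq_zero fun j _ => ?_
      rw [S2 N hm1, zero_mul]
    have e3 : ∀ j, Hm N p a m j * Dm N m G j
        = Hm N p a m j * Avg N (m+1) G j - Hm N p a m j * Avg N m G j := by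
      intro j; rw [Dm]; ring
    rw [Finset.sum_congr rfl (fun j _ => e3 j), Finset.sum_sub_distrib, e2, sub_zero, e1]
  -- Cauchy-Schwarz at each level
  have hD3 : ∀ m ∈ Finset.range N, ∑ j ∈ Finset.range (2^N), Hm N p a m j * Dm N m G j
      ≤ Real.sqrt (Bm m) * ((2:ℝ)^(((N:ℝ)-(m:ℝ))+(m:ℝ)/p) * Phi N G m) := by
    intro m hm
    have hm1 : m + 1 ≤ N := Finset.mem_range.1 hm
    have hcs := sum_mul_le_sqrt (Finset.range (2^N)) (Hm N p a m) (Dm N m G)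
    have hsq1 : Real.sqrt (∑ j ∈ Finset.range (2^N), (Hm N p a m j)^2)
        ≤ (2:ℝ)^(((N:ℝ)-(m:ℝ))/2) * (2:ℝ)^((m:ℝ)/p) * Real.sqrt (Bm m) := by
      refine le_trans (Real.sqrt_le_sqrt (S3 N hm1)) ?_
      rw [Real.sqrt_mul (by positivity), Real.sqrt_mul (by positivity)]
      have c1 : Real.sqrt ((2:ℝ)^(N-m)) = (2:ℝ)^(((N:ℝ)-(m:ℝ))/2) := by
        rw [two_pow_eq_rpow (N-m), Nat.cast_sub (le_trans (Nat.le_succ m) hm1), two_rpow_half]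
      have c2 : Real.sqrt (((2:ℝ)^((m:ℝ)/p))^2) = (2:ℝ)^((m:ℝ)/p) :=
        Real.sqrt_sq (by positivity)
      rw [c1, c2, hBm]
    have hsq2 : Real.sqrt (Qm N m G) = (2:ℝ)^(((N:ℝ)-(m:ℝ))/2) * Phi N G m := by
      rw [Phi, ← mul_assoc, ← Real.rpow_add (by norm_num : (0:ℝ) < 2)]
      rw [show ((N:ℝ)-(m:ℝ))/2 + ((m:ℝ)-(N:ℝ))/2 = 0 by ring, Real.rpow_zero, one_mul]
    calc ∑ j ∈ Finset.range (2^N), Hm N p a m j * Dm N m G j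
        ≤ Real.sqrt (∑ j ∈ Finset.range (2^N), (Hm N p a m j)^2) * Real.sqrt (Qm N m G) := by
          exact hcs
      _ ≤ ((2:ℝ)^(((N:ℝ)-(m:ℝ))/2) * (2:ℝ)^((m:ℝ)/p) * Real.sqrt (Bm m))
            * ((2:ℝ)^(((N:ℝ)-(m:ℝ))/2) * Phi N G m) := by
          rw [hsq2]
          refine mul_le_mul_of_nonneg_right hsq1 ?_
          rw [← hsq2]
          exact Real.sqrt_nonneg _
      _ = Real.sqrt (Bm m) * (((2:ℝ)^(((N:ℝ)-(m:ℝ))/2) * (2:ℝ)^(((N:ℝ)-(m:ℝ))/2)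
            * (2:ℝ)^((m:ℝ)/p)) * Phi N G m) := by ring
      _ = Real.sqrt (Bm m) * ((2:ℝ)^(((N:ℝ)-(m:ℝ))+(m:ℝ)/p) * Phi N G m) := by
          rw [← Real.rpow_add (by norm_num : (0:ℝ) < 2),
            ← Real.rpow_add (by norm_num : (0:ℝ) < 2)]
          norm_num
  -- Hölder in m
  have hHolder : ∑ m ∈ Finset.range N,
        Real.sqrt (Bm m) * ((2:ℝ)^(((N:ℝ)-(m:ℝ))+(m:ℝ)/p) * Phi N G m)
      ≤ (∑ m ∈ Finset.range N, (Real.sqrt (Bm m))^p)^(1/p)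
        * (∑ m ∈ Finset.range N, ((2:ℝ)^(((N:ℝ)-(m:ℝ))+(m:ℝ)/p) * Phi N G m)^q)^(1/q) := by
    have hconj : Real.HolderConjugate p q := Real.holderConjugate_iff.mpr ⟨hp1, hpqconj⟩
    refine Real.inner_le_Lp_mul_Lq_of_nonneg (s := Finset.range N) (hpq := hconj)
      (hf := fun m _ => Real.sqrt_nonneg _) (hg := fun m _ => ?_)
    exact mul_nonneg (by positivity) (Phi_nonneg N G m)
  -- claimC application
  have hsum2 : ∑ m ∈ Finset.range N, ((2:ℝ)^(((N:ℝ)-(m:ℝ))+(m:ℝ)/p) * Phi N G m)^q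
      ≤ (2:ℝ)^((N:ℝ)*q) * (K0 q * (((2:ℝ)^N)⁻¹ * X)) := by
    have hterm : ∀ m ∈ Finset.range N, ((2:ℝ)^(((N:ℝ)-(m:ℝ))+(m:ℝ)/p) * Phi N G m)^q
        = (2:ℝ)^((N:ℝ)*q) * (((2:ℝ)^m)⁻¹ * (Phi N G m)^q) := by
      intro m _
      rw [Real.mul_rpow (by positivity) (Phi_nonneg N G m)]
      have e1 : ((2:ℝ)^(((N:ℝ)-(m:ℝ))+(m:ℝ)/p))^q
          = (2:ℝ)^((((N:ℝ)-(m:ℝ))+(m:ℝ)/p)*q) := by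
        rw [← Real.rpow_mul (by norm_num : (0:ℝ) ≤ 2)]
      have h1 : q*(1-1/p) = 1 := by rw [hq]; field_simp
      have e2 : (((N:ℝ)-(m:ℝ))+(m:ℝ)/p)*q = (N:ℝ)*q - (m:ℝ) := by
        linear_combination (-(m:ℝ)) * h1
      have e3 : (2:ℝ)^((N:ℝ)*q - (m:ℝ)) = (2:ℝ)^((N:ℝ)*q) * ((2:ℝ)^m)⁻¹ := by
        rw [Real.rpow_sub (by norm_num : (0:ℝ) < 2), div_eq_mul_inv, two_pow_eq_rpow m]
      rw [e1, e2, e3]; ring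
    rw [Finset.sum_congr rfl hterm, ← Finset.mul_sum]
    refine mul_le_mul_of_nonneg_left ?_ (by positivity)
    calc ∑ m ∈ Finset.range N, ((2:ℝ)^m)⁻¹ * (Phi N G m)^q
        ≤ K0 q * (((2:ℝ)^N)⁻¹ * ∑ j ∈ Finset.range (2^N), |G j|^q) := claimC N hq1 hq2 G
      _ = K0 q * (((2:ℝ)^N)⁻¹ * X) := by rw [hsumGq]
  -- chain everything
  have h2R : (∑ m ∈ Finset.range N, (Real.sqrt (Bm m))^p) = R := by
    rw [hR]
    refine Finset.sum_congr rfl fun m _ => ?_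
    rw [Real.sqrt_eq_rpow, ← Real.rpow_mul (hBnn m)]
    congr 1
    ring
  have hchain : X ≤ R^(1/p) * ((2:ℝ)^((N:ℝ)*q) * (K0 q * (((2:ℝ)^N)⁻¹ * X)))^(1/q) := by
    calc X = ∑ j ∈ Finset.range (2^N), F j * G j := by
          rw [hX]; exact (Finset.sum_congr rfl fun j _ => (hFG j)).symm
      _ = ∑ m ∈ Finset.range N, ∑ j ∈ Finset.range (2^N), Hm N p a m j * G j := hD1
      _ = ∑ m ∈ Finset.range N, ∑ j ∈ Finset.range (2^N), Hm N p a m j * Dm N m G j :=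
          Finset.sum_congr rfl hD2
      _ ≤ ∑ m ∈ Finset.range N,
            Real.sqrt (Bm m) * ((2:ℝ)^(((N:ℝ)-(m:ℝ))+(m:ℝ)/p) * Phi N G m) :=
          Finset.sum_le_sum hD3
      _ ≤ (∑ m ∈ Finset.range N, (Real.sqrt (Bm m))^p)^(1/p)
            * (∑ m ∈ Finset.range N, ((2:ℝ)^(((N:ℝ)-(m:ℝ))+(m:ℝ)/p) * Phi N G m)^q)^(1/q) :=
          hHolder
      _ ≤ R^(1/p) * ((2:ℝ)^((N:ℝ)*q) * (K0 q * (((2:ℝ)^N)⁻¹ * X)))^(1/q) := by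
          rw [h2R]
          refine mul_le_mul_of_nonneg_left ?_ (Real.rpow_nonneg hRnn _)
          refine Real.rpow_le_rpow ?_ hsum2 (by positivity)
          exact Finset.sum_nonneg fun m _ =>
            Real.rpow_nonneg (mul_nonneg (by positivity) (Phi_nonneg N G m)) q
  -- final algebra
  rcases eq_or_lt_of_le hXnn with hX0 | hX0
  · rw [← hX0, mul_zero]
    exact mul_nonneg (Real.rpow_nonneg (le_of_lt hK0pos) _) hRnn
  · set W : ℝ := (2:ℝ)^((N:ℝ)*q) * (K0 q * ((2:ℝ)^N)⁻¹) with hW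
    have hWpos : 0 < W := by
      rw [hW]
      have h0 := hK0pos
      positivity
    have hchain2 : X ≤ (R^(1/p) * W^(1/q)) * X^(1/q) := by
      have e : (2:ℝ)^((N:ℝ)*q) * (K0 q * (((2:ℝ)^N)⁻¹ * X)) = W * X := by rw [hW]; ring
      calc X ≤ R^(1/p) * ((2:ℝ)^((N:ℝ)*q) * (K0 q * (((2:ℝ)^N)⁻¹ * X)))^(1/q) := hchain
        _ = R^(1/p) * (W * X)^(1/q) := by rw [e]
        _ = (R^(1/p) * W^(1/q)) * X^(1/q) := by
            rw [Real.mul_rpow (le_of_lt hWpos) hXnn]; ring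
    have hXfrac : X^(1/p) ≤ R^(1/p) * W^(1/q) := by
      have hXq : (0:ℝ) < X^(1/q) := Real.rpow_pos_of_pos hX0 _
      refine le_of_mul_le_mul_right ?_ hXq
      calc X^(1/p) * X^(1/q) = X := by
            rw [← Real.rpow_add hX0, hinvpq, Real.rpow_one]
        _ ≤ (R^(1/p) * W^(1/q)) * X^(1/q) := hchain2
    have hXle : X ≤ R * W^(p/q) := by
      have h := Real.rpow_le_rpow (Real.rpow_nonneg hXnn _) hXfrac (le_of_lt hp0)
      have e1 : (X^(1/p))^p = X := by
        rw [← Real.rpow_mul hXnn, one_div, inv_mul_cancel₀ hpne, Real.rpow_one]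
      have e2 : (R^(1/p) * W^(1/q))^p = R * W^(p/q) := by
        rw [Real.mul_rpow (Real.rpow_nonneg hRnn _) (Real.rpow_nonneg (le_of_lt hWpos) _),
          ← Real.rpow_mul hRnn, ← Real.rpow_mul (le_of_lt hWpos), one_div,
          inv_mul_cancel₀ hpne, Real.rpow_one]
        congr 2
        ring
      rw [e1, e2] at h
      exact h
    have hq1pq : (q-1)*(p/q) = 1 := by
      rw [hq]
      field_simp
      ring
    have hWpq : W^(p/q) = (2:ℝ)^((N:ℝ)) * (K0 q)^(p/q) := by
      rw [hW]
      have e0 : (2:ℝ)^((N:ℝ)*q) * (K0 q * ((2:ℝ)^N)⁻¹)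
          = (2:ℝ)^((N:ℝ)*q - (N:ℝ)) * K0 q := by
        rw [Real.rpow_sub (by norm_num : (0:ℝ) < 2), div_eq_mul_inv, two_pow_eq_rpow N]
        ring
      rw [e0, Real.mul_rpow (by positivity) (le_of_lt hK0pos),
        ← Real.rpow_mul (by norm_num : (0:ℝ) ≤ 2)]
      congr 2
      linear_combination (N:ℝ) * hq1pq
    have hfin : (0:ℝ) < (2:ℝ)^((N:ℝ)) := Real.rpow_pos_of_pos (by norm_num) _
    calc ((2:ℝ)^N)⁻¹ * X ≤ ((2:ℝ)^N)⁻¹ * (R * ((2:ℝ)^((N:ℝ)) * (K0 q)^(p/q))) := by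
          refine mul_le_mul_of_nonneg_left ?_ (by positivity)
          rw [← hWpq]
          exact hXle
      _ = (K0 q)^(p/q) * R := by
          rw [two_pow_eq_rpow N]
          field_simp


lemma cast_div_pow {n C : ℕ} (hn : n ≤ N) :
    ((C * 2^(N-n) : ℕ):ℝ)/2^N = (C:ℝ)/2^n := by
  have hpow : (2:ℝ)^(N-n) * (2:ℝ)^n = (2:ℝ)^N := by
    rw [← pow_add]; congr 1; omega
  push_cast
  rw [div_eq_div_iff (by positivity) (by positivity), ← hpow]
  ring

/-- value of a Haar function on the interior of a dyadic interval of generation `N` -/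
lemma haar_on_dyadic {n i j : ℕ} (hn : n < N) (hi : 1 ≤ i) {t : ℝ}
    (ht1 : (j:ℝ)/2^N < t) (ht2 : t < ((j:ℝ)+1)/2^N) :
    haar n i t = hK i (j / 2^(N-(n+1))) := by
  have h2N : (0:ℝ) < 2^N := by positivity
  set b := (2:ℕ)^(N-(n+1)) with hbdef
  have hbpos : (0:ℕ) < b := Nat.pow_pos (by norm_num)
  have h2b : (2:ℕ)^(N-n) = 2*b := by
    rw [hbdef, ← pow_succ']; congr 1; omega
  have claim1 : ∀ C : ℕ, ((C:ℝ)/2^N ≤ t ↔ C ≤ j) := by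
    intro C
    constructor
    · intro h
      have h1 : (C:ℝ) ≤ t*2^N := by rwa [div_le_iff₀ h2N] at h
      have h2 : t*2^N < (j:ℝ)+1 := by
        have := (lt_div_iff₀ h2N).1 ht2
        linarith
      have : (C:ℝ) < (j:ℝ)+1 := lt_of_le_of_lt h1 h2
      have : C < j+1 := by exact_mod_cast this
      omega
    · intro h
      have h1 : (C:ℝ) ≤ (j:ℝ) := by exact_mod_cast h
      calc (C:ℝ)/2^N ≤ (j:ℝ)/2^N := by
            exact (div_le_div_iff_of_pos_right h2N).2 h1
        _ ≤ t := le_of_lt ht1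
  have claim2 : ∀ C : ℕ, (t < (C:ℝ)/2^N ↔ j+1 ≤ C) := by
    intro C
    constructor
    · intro h
      have h1 : t*2^N < (C:ℝ) := by rwa [lt_div_iff₀ h2N] at h
      have h2 : (j:ℝ) < t*2^N := by
        have := (div_lt_iff₀ h2N).1 ht1
        linarith
      have : (j:ℝ) < (C:ℝ) := lt_trans h2 h1
      have : j < C := by exact_mod_cast this
      omega
    · intro h
      have h1 : ((j:ℝ)+1) ≤ (C:ℝ) := by exact_mod_cast h
      calc t < ((j:ℝ)+1)/2^N := ht2
        _ ≤ (C:ℝ)/2^N := (div_le_div_iff_of_pos_right h2N).2 h1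
  have hnN : n ≤ N := le_of_lt hn
  have hn1N : n+1 ≤ N := hn
  have em1 : (i-1)*2^(N-n) = (2*i-2)*b := by
    rw [h2b, ← Nat.mul_assoc]
    congr 1
    omega
  have em2 : i*2^(N-n) = (2*i)*b := by
    rw [h2b, ← Nat.mul_assoc]
    congr 1
    omega
  have e1c : (((i-1) * 2^(N-n) : ℕ):ℝ)/2^N = ((i:ℝ)-1)/2^n := by
    rw [cast_div_pow N hnN]
    congr 1
    push_cast [Nat.cast_sub hi]
    ring
  have e2c : (((2*i-1) * b : ℕ):ℝ)/2^N = (2*(i:ℝ)-1)/2^(n+1) := by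
    rw [hbdef, cast_div_pow N hn1N]
    congr 1
    have h2i : 1 ≤ 2*i := by omega
    push_cast [Nat.cast_sub h2i]
    ring
  have e4c : ((i * 2^(N-n) : ℕ):ℝ)/2^N = (i:ℝ)/2^n := by
    rw [cast_div_pow N hnN]
  have hcond1 : (((i:ℝ) - 1) / 2 ^ n ≤ t ∧ t < (2 * (i:ℝ) - 1) / 2 ^ (n + 1))
      ↔ ((2*i-2)*b ≤ j ∧ j < (2*i-1)*b) := by
    rw [← e1c, ← e2c, claim1, claim2, em1]
    omega
  have hcond2 : ((2 * (i:ℝ) - 1) / 2 ^ (n + 1) ≤ t ∧ t < (i:ℝ) / 2 ^ n)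
      ↔ ((2*i-1)*b ≤ j ∧ j < (2*i)*b) := by
    rw [← e2c, ← e4c, claim1, claim2, em2]
    omega
  have hdivlt : j < (j/b + 1)*b := by
    have hdm := Nat.div_add_mod j b
    have hml := Nat.mod_lt j hbpos
    calc j = b*(j/b) + j%b := hdm.symm
      _ < b*(j/b) + b := by omega
      _ = (j/b+1)*b := by ring
  have hdivle : (j/b)*b ≤ j := Nat.div_mul_le_self j b
  unfold haar hK
  by_cases hc1 : j / b = 2*i-2
  · have hA : (2*i-2)*b ≤ j ∧ j < (2*i-1)*b := by
      constructor
      · rw [← hc1]; exact hdivle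
      · have : (2*i-1) = j/b + 1 := by omega
        rw [this]; exact hdivlt
    rw [if_pos (hcond1.2 hA), if_pos (by omega)]
  by_cases hc2 : j / b = 2*i-1
  · have hB : (2*i-1)*b ≤ j ∧ j < (2*i)*b := by
      constructor
      · rw [← hc2]; exact hdivle
      · have : (2*i) = j/b + 1 := by omega
        rw [this]; exact hdivlt
    have hnA : ¬(((i:ℝ) - 1) / 2 ^ n ≤ t ∧ t < (2 * (i:ℝ) - 1) / 2 ^ (n + 1)) := by
      intro hcc
      have h := hcond1.1 hcc
      have : j/b = 2*i-2 := Nat.div_eq_of_lt_le h.1 (by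
        have : (2*i-2)+1 = 2*i-1 := by omega
        rw [this]; exact h.2)
      exact hc1 this
    rw [if_neg hnA, if_pos (hcond2.2 hB), if_neg (by omega), if_pos (by omega)]
  · have hnA : ¬(((i:ℝ) - 1) / 2 ^ n ≤ t ∧ t < (2 * (i:ℝ) - 1) / 2 ^ (n + 1)) := by
      intro hcc
      have h := hcond1.1 hcc
      have : j/b = 2*i-2 := Nat.div_eq_of_lt_le h.1 (by
        have : (2*i-2)+1 = 2*i-1 := by omega
        rw [this]; exact h.2)
      exact hc1 this
    have hnB : ¬((2 * (i:ℝ) - 1) / 2 ^ (n + 1) ≤ t ∧ t < (i:ℝ) / 2 ^ n) := by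
      intro hcc
      have h := hcond2.1 hcc
      have : j/b = 2*i-1 := Nat.div_eq_of_lt_le h.1 (by
        have : (2*i-1)+1 = 2*i := by omega
        rw [this]; exact h.2)
      exact hc2 this
    rw [if_neg hnA, if_neg hnB, if_neg (by omega), if_neg (by omega)]

theorem haar_operator_bounded_aux (p : ℝ) (hp2 : 2 < p) :
    ∃ C : ℝ, 0 < C ∧ ∀ a : ℕ → ℕ → ℝ,
      (∃ N : ℕ, ∀ n, N ≤ n → ∀ i, a n i = 0) →
      (∫ t in Set.Ioo (0:ℝ) 1,
          |∑' n : ℕ, ∑ i ∈ Finset.Icc (1:ℕ) (2 ^ n),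
              a n i * (2:ℝ) ^ ((n:ℝ) / p) * haar n i t| ^ p) ^ (1 / p) ≤
        C * (∑' n : ℕ,
              (∑ i ∈ Finset.Icc (1:ℕ) (2 ^ n), (a n i) ^ 2) ^ (p / 2)) ^ (1 / p) := by
  have hp0 : (0:ℝ) < p := by linarith
  have hpne : p ≠ 0 := ne_of_gt hp0
  have hpm1 : (0:ℝ) < p - 1 := by linarith
  set q : ℝ := p/(p-1) with hqdef
  have hq1 : 1 < q := by rw [hqdef, lt_div_iff₀ hpm1]; linarith
  have hq2 : q < 2 := by rw [hqdef, div_lt_iff₀ hpm1]; linarith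
  set CC : ℝ := (K0 q)^(p/q) with hCC
  have hCCpos : 0 < CC := Real.rpow_pos_of_pos (K0_pos hq1 hq2) _
  refine ⟨CC^(1/p), Real.rpow_pos_of_pos hCCpos _, ?_⟩
  intro a ha
  obtain ⟨N, hN⟩ := ha
  have h2N : (0:ℝ) < 2^N := by positivity
  have hRHS : (∑' n : ℕ, (∑ i ∈ Finset.Icc (1:ℕ) (2 ^ n), (a n i) ^ 2) ^ (p / 2))
      = ∑ n ∈ Finset.range N, (∑ i ∈ Finset.Icc (1:ℕ) (2 ^ n), (a n i) ^ 2) ^ (p / 2) := by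
    refine tsum_eq_sum ?_
    intro n hn
    have hz : ∑ i ∈ Finset.Icc (1:ℕ) (2 ^ n), (a n i)^2 = 0 :=
      Finset.sum_eq_zero fun i _ => by
        rw [hN n (le_of_not_gt (fun hlt => hn (Finset.mem_range.2 hlt))) i]
        norm_num
    rw [hz, Real.zero_rpow (ne_of_gt (by linarith : (0:ℝ) < p/2))]
  set F : ℕ → ℝ := Ff N p a with hF
  set S : Set ℝ := (((Finset.range (2^N+1)).image (fun j : ℕ => (j:ℝ)/2^N) : Finset ℝ) : Set ℝ) with hS
  have hfg : ∀ t, t ∈ Set.Ioo (0:ℝ) 1 → t ∉ S →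
      |∑' n : ℕ, ∑ i ∈ Finset.Icc (1:ℕ) (2 ^ n),
          a n i * (2:ℝ) ^ ((n:ℝ) / p) * haar n i t| ^ p
        = ∑ j ∈ Finset.range (2^N),
            Set.indicator (Set.Ioo ((j:ℝ)/2^N) (((j:ℝ)+1)/2^N)) (fun _ => |F j|^p) t := by
    intro t ht htS
    obtain ⟨ht0, ht1'⟩ := ht
    set j0 := Nat.floor (t*2^N) with hj0def
    have hfl : (j0:ℝ) ≤ t*2^N := Nat.floor_le (by positivity)
    have hfu : t*2^N < (j0:ℝ)+1 := Nat.lt_floor_add_one (t*2^N)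
    have hj0lt : j0 < 2^N := by
      have h1 : t*2^N < 2^N := by nlinarith
      have h2 : (j0:ℝ) < (2:ℝ)^N := lt_of_le_of_lt hfl h1
      exact_mod_cast h2
    have hne : t ≠ (j0:ℝ)/2^N := by
      intro heq
      refine htS ?_
      rw [hS]
      simp only [Finset.coe_image, Set.mem_image, Finset.mem_coe, Finset.mem_range]
      exact ⟨j0, by omega, heq.symm⟩
    have hlow : (j0:ℝ)/2^N < t := by
      rcases eq_or_lt_of_le hfl with he | hlt
      · exfalso
        apply hne
        rw [eq_div_iff (ne_of_gt h2N)]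
        linarith [he]
      · rw [div_lt_iff₀ h2N]; linarith
    have hupp : t < ((j0:ℝ)+1)/2^N := by rw [lt_div_iff₀ h2N]; linarith
    have htsum : (∑' n : ℕ, ∑ i ∈ Finset.Icc (1:ℕ) (2 ^ n),
          a n i * (2:ℝ) ^ ((n:ℝ) / p) * haar n i t)
        = ∑ n ∈ Finset.range N, ∑ i ∈ Finset.Icc (1:ℕ) (2 ^ n),
            a n i * (2:ℝ) ^ ((n:ℝ) / p) * haar n i t := by
      refine tsum_eq_sum ?_
      intro n hn
      refine Finset.sum_eq_zero fun i _ => ?_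
      rw [hN n (le_of_not_gt (fun hlt => hn (Finset.mem_range.2 hlt))) i]
      ring
    have hval : ∑ n ∈ Finset.range N, ∑ i ∈ Finset.Icc (1:ℕ) (2 ^ n),
        a n i * (2:ℝ) ^ ((n:ℝ) / p) * haar n i t = F j0 := by
      rw [hF]
      show _ = Ff N p a j0
      rw [Ff]
      refine Finset.sum_congr rfl fun n hn => ?_
      rw [Hm]
      refine Finset.sum_congr rfl fun i hi => ?_
      rw [haar_on_dyadic N (Finset.mem_range.1 hn) (Finset.mem_Icc.1 hi).1 hlow hupp]
    have hind : ∑ j ∈ Finset.range (2^N),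
        Set.indicator (Set.Ioo ((j:ℝ)/2^N) (((j:ℝ)+1)/2^N)) (fun _ => |F j|^p) t
          = |F j0|^p := by
      have hz : ∀ j ∈ Finset.range (2^N), j ≠ j0 →
          Set.indicator (Set.Ioo ((j:ℝ)/2^N) (((j:ℝ)+1)/2^N)) (fun _ => |F j|^p) t = 0 := by
        intro j hj hjne
        refine Set.indicator_of_notMem ?_ _
        intro htj
        rw [Set.mem_Ioo] at htj
        obtain ⟨hj1, hj2⟩ := htj
        apply hjne
        have c1 : (j:ℝ) < (j0:ℝ)+1 := (div_lt_div_iff_of_pos_right h2N).1 (lt_trans hj1 hupp)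
        have c2 : (j0:ℝ) < (j:ℝ)+1 := (div_lt_div_iff_of_pos_right h2N).1 (lt_trans hlow hj2)
        have c1' : j < j0+1 := by exact_mod_cast c1
        have c2' : j0 < j+1 := by exact_mod_cast c2
        omega
      rw [Finset.sum_eq_single_of_mem j0 (Finset.mem_range.2 hj0lt) hz]
      exact Set.indicator_of_mem (Set.mem_Ioo.2 ⟨hlow, hupp⟩) _
    rw [htsum, hval, hind]
  have hfinS : S.Finite := by
    rw [hS]; exact Finset.finite_toSet _
  have haefg : (fun t => |∑' n : ℕ, ∑ i ∈ Finset.Icc (1:ℕ) (2 ^ n),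
        a n i * (2:ℝ) ^ ((n:ℝ) / p) * haar n i t| ^ p)
      =ᵐ[MeasureTheory.volume.restrict (Set.Ioo (0:ℝ) 1)]
      (fun t => ∑ j ∈ Finset.range (2^N),
        Set.indicator (Set.Ioo ((j:ℝ)/2^N) (((j:ℝ)+1)/2^N)) (fun _ => |F j|^p) t) := by
    rw [Filter.EventuallyEq, MeasureTheory.ae_iff]
    rw [MeasureTheory.Measure.restrict_apply' measurableSet_Ioo]
    refine MeasureTheory.measure_mono_null ?_ (hfinS.measure_zero _)
    intro t ht
    by_contra htS
    exact ht.1 (hfg t ht.2 htS)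
  have hInt : (∫ t in Set.Ioo (0:ℝ) 1, |∑' n : ℕ, ∑ i ∈ Finset.Icc (1:ℕ) (2 ^ n),
        a n i * (2:ℝ) ^ ((n:ℝ) / p) * haar n i t| ^ p)
      = ((2:ℝ)^N)⁻¹ * ∑ j ∈ Finset.range (2^N), |F j|^p := by
    rw [MeasureTheory.integral_congr_ae haefg]
    haveI hfinmeas : MeasureTheory.IsFiniteMeasure
        (MeasureTheory.volume.restrict (Set.Ioo (0:ℝ) 1)) := by
      constructor
      rw [MeasureTheory.Measure.restrict_apply_univ, Real.volume_Ioo]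
      exact ENNReal.ofReal_lt_top
    rw [MeasureTheory.integral_finset_sum _
      (fun j _ => (MeasureTheory.integrable_const (|F j|^p)).indicator measurableSet_Ioo)]
    have hper : ∀ j ∈ Finset.range (2^N),
        (∫ t in Set.Ioo (0:ℝ) 1,
            Set.indicator (Set.Ioo ((j:ℝ)/2^N) (((j:ℝ)+1)/2^N)) (fun _ => |F j|^p) t)
          = ((2:ℝ)^N)⁻¹ * |F j|^p := by
      intro j hj
      rw [MeasureTheory.integral_indicator_const _ measurableSet_Ioo]
      rw [MeasureTheory.measureReal_def, MeasureTheory.Measure.restrict_apply measurableSet_Ioo]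
      have hsub : Set.Ioo ((j:ℝ)/2^N) (((j:ℝ)+1)/2^N) ⊆ Set.Ioo (0:ℝ) 1 := by
        intro x hx
        constructor
        · have h0 : (0:ℝ) ≤ (j:ℝ)/2^N := by positivity
          linarith [hx.1]
        · have hjn : (j:ℕ) + 1 ≤ 2^N := Finset.mem_range.1 hj
          have hjr : ((j:ℝ)+1) ≤ (2:ℝ)^N := by exact_mod_cast hjn
          have hjb : ((j:ℝ)+1)/2^N ≤ 1 := by
            rw [div_le_one h2N]; exact hjr
          linarith [hx.2]
      rw [Set.inter_eq_self_of_subset_left hsub, Real.volume_Ioo]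
      have harith : ((j:ℝ)+1)/2^N - (j:ℝ)/2^N = ((2:ℝ)^N)⁻¹ := by
        rw [div_sub_div_same]
        rw [show ((j:ℝ)+1) - (j:ℝ) = 1 by ring]
        rw [one_div]
      rw [harith, ENNReal.toReal_ofReal (by positivity), smul_eq_mul]
    rw [Finset.sum_congr rfl hper, ← Finset.mul_sum]
  rw [hInt, hRHS]
  have hmain := discrete_main N hp2 hqdef a
  have hXnn : (0:ℝ) ≤ ∑ j ∈ Finset.range (2^N), |F j|^p :=
    Finset.sum_nonneg fun j _ => Real.rpow_nonneg (abs_nonneg _) p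
  have hLnn : 0 ≤ ((2:ℝ)^N)⁻¹ * ∑ j ∈ Finset.range (2^N), |F j|^p := by positivity
  have hRnn : 0 ≤ ∑ n ∈ Finset.range N, (∑ i ∈ Finset.Icc (1:ℕ) (2^n), (a n i)^2)^(p/2) :=
    Finset.sum_nonneg fun n _ =>
      Real.rpow_nonneg (Finset.sum_nonneg fun i _ => sq_nonneg _) _
  calc (((2:ℝ)^N)⁻¹ * ∑ j ∈ Finset.range (2^N), |F j|^p)^(1/p)
      ≤ (CC * ∑ n ∈ Finset.range N, (∑ i ∈ Finset.Icc (1:ℕ) (2^n), (a n i)^2)^(p/2))^(1/p) := by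
        refine Real.rpow_le_rpow hLnn ?_ (by positivity)
        rw [hCC]
        exact hmain
    _ = CC^(1/p) * (∑ n ∈ Finset.range N,
          (∑ i ∈ Finset.Icc (1:ℕ) (2^n), (a n i)^2)^(p/2))^(1/p) :=
        Real.mul_rpow (le_of_lt hCCpos) hRnn

end
end HaarOp

/-- For `2 < p < ∞` the basis-to-basis map
`e_{n,i} ↦ h_{n,i}/‖h_{n,i}‖_p` extends to a bounded operator from
`(Σₙ ⊕ ℓ²_{2^n})_p` to `L^p(0,1)`: there is `C_p` with
`‖Σ_{n,i} a_{n,i} h_{n,i}/‖h_{n,i}‖_p‖_{L^p} ≤ C_p (Σₙ(Σᵢ a_{n,i}²)^{p/2})^{1/p}`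
for all finitely supported `(a_{n,i})`.  Here `1/‖h_{n,i}‖_p = 2^{n/p}`. -/
theorem haar_operator_bounded (p : ℝ) (hp2 : 2 < p) :
    ∃ C : ℝ, 0 < C ∧ ∀ a : ℕ → ℕ → ℝ,
      (∃ N : ℕ, ∀ n, N ≤ n → ∀ i, a n i = 0) →
      (∫ t in Set.Ioo (0:ℝ) 1,
          |∑' n : ℕ, ∑ i ∈ Finset.Icc (1:ℕ) (2 ^ n),
              a n i * (2:ℝ) ^ ((n:ℝ) / p) * haar n i t| ^ p) ^ (1 / p) ≤
        C * (∑' n : ℕ,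
              (∑ i ∈ Finset.Icc (1:ℕ) (2 ^ n), (a n i) ^ 2) ^ (p / 2)) ^ (1 / p) := by
  exact HaarOp.haar_operator_bounded_aux p hp2
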